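/- arXiv:2010.00147 — 3 statements merged into one kernel-verified Lean document; each statement's English description precedes it below -/
import Mathlib

section
/- Let (G,α) be a weighted graph with expansion (H,β), and let E' be a multiset of edges on the vertices of H such that for each pair of vertices a,b of H, a and b lie in the same connected component of the graph (V(H),E') if and only if aRb. Then X_{(G,α)} = Σ_{S ⊆ E'} (−1)^{|S|} X_{(H+S,β)}, where H+S denotes the graph obtained from H by adding the edge multiset S. -/
open scoped BigOperators
open scoped Classical

namespace CSF

/-! ## Extended chromatic symmetric functions of multigraphs

A (multi)graph on a vertex type `V` is given by a multiset of edges `E : Multiset (Sym2 V)`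
(loops and multiple edges allowed).  Colours are positive integers `ℕ+`, and the
(extended) chromatic symmetric function lives in `MvPowerSeries ℕ+ ℚ`, the power series
in the commuting variables `x_j`, `j : ℕ+`. -/

/-- A proper colouring of the multigraph with edge multiset `E`. -/
def Proper {V C : Type*} (E : Multiset (Sym2 V)) (κ : V → C) : Prop :=
  ∀ u v : V, s(u, v) ∈ E → κ u ≠ κ v

/-- The monomial `∏_v x_{κ(v)}^{w(v)}`, recorded as its exponent vector. -/
noncomputable def mon {V : Type*} [Fintype V] (w : V → ℕ) (κ : V → ℕ+) : ℕ+ →₀ ℕ :=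
  ∑ v, Finsupp.single (κ v) (w v)

/-- The extended chromatic symmetric function `X_{(G,w)}` of the weighted graph with
edge multiset `E` and vertex weights `w`: the coefficient of a monomial `m` is the number
of proper colourings `κ` with `∏_v x_{κ(v)}^{w(v)} = x^m`. -/
noncomputable def X {V : Type*} [Fintype V] (E : Multiset (Sym2 V)) (w : V → ℕ) :
    MvPowerSeries ℕ+ ℚ :=
  fun m => (Nat.card {κ : V → ℕ+ // Proper E κ ∧ mon w κ = m} : ℚ)

/-- The chromatic polynomial `χ_G(k)`: the number of proper colourings with `k` colours. -/
noncomputable def chrom {V : Type*} [Fintype V] (E : Multiset (Sym2 V)) (k : ℕ) : ℕ :=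
  Nat.card {κ : V → Fin k // Proper E κ}

/-- Edge multiset of the labelled path `P_n` on `Fin n`: edges `v_i v_{i+1}`. -/
def pathE (n : ℕ) : Multiset (Sym2 (Fin n)) :=
  ((Finset.univ : Finset (Fin n × Fin n)).filter
    (fun p => (p.1 : ℕ) + 1 = (p.2 : ℕ))).val.map (fun p => s(p.1, p.2))

/-- Edge multiset of the labelled star `S_n` on `Fin n`: edges `v_i v_n`, `i ∈ [n-1]`. -/
def starE (n : ℕ) : Multiset (Sym2 (Fin n)) :=
  ((Finset.univ : Finset (Fin n × Fin n)).filter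
    (fun p => (p.1 : ℕ) + 1 < n ∧ (p.2 : ℕ) + 1 = n)).val.map (fun p => s(p.1, p.2))

/-- Edge multiset of a disjoint union of graphs on `Fin (m i)`, `i : Fin k`. -/
noncomputable def unionE {k : ℕ} {m : Fin k → ℕ}
    (Es : ∀ i, Multiset (Sym2 (Fin (m i)))) : Multiset (Sym2 (Σ i, Fin (m i))) :=
  ∑ i, (Es i).map (Sym2.map (fun v => ⟨i, v⟩))

/-- Extended chromatic symmetric function of a disjoint union of weighted graphs. -/
noncomputable def Xunion {k : ℕ} {m : Fin k → ℕ}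
    (Es : ∀ i, Multiset (Sym2 (Fin (m i)))) (ws : ∀ i, Fin (m i) → ℕ) :
    MvPowerSeries ℕ+ ℚ :=
  X (unionE Es) (fun v => ws v.1 v.2)

/-- `X_{P_l}`: chromatic symmetric function of the disjoint union of unweighted paths
`P_{l_1} ∪ ⋯ ∪ P_{l_k}`. -/
noncomputable def XPaths (l : List ℕ) : MvPowerSeries ℕ+ ℚ :=
  Xunion (m := fun i : Fin l.length => l.get i) (fun i => pathE (l.get i)) (fun _ _ => 1)

/-- `X_{S_l}`: chromatic symmetric function of a disjoint union of unweighted stars. -/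
noncomputable def XStars (l : List ℕ) : MvPowerSeries ℕ+ ℚ :=
  Xunion (m := fun i : Fin l.length => l.get i) (fun i => starE (l.get i)) (fun _ _ => 1)

/-- `X_{(P_{ℓ(α)}, α)}`: the extended chromatic symmetric function of the path on
`ℓ(α)` vertices whose `i`-th vertex has weight `α_i`. -/
noncomputable def Xwpath (α : List ℕ) : MvPowerSeries ℕ+ ℚ :=
  X (pathE α.length) (fun i => α.get i)

/-! ## Symmetric functions -/

/-- The power sum symmetric function `p_i = ∑_j x_j^i`. -/
noncomputable def pS (i : ℕ) : MvPowerSeries ℕ+ ℚ :=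
  fun m => if ∃ j : ℕ+, m = Finsupp.single j i then 1 else 0

/-- The complete homogeneous symmetric function `h_i`. -/
noncomputable def hS (i : ℕ) : MvPowerSeries ℕ+ ℚ :=
  fun m => if (m.sum fun _ k => k) = i then 1 else 0

/-- The elementary symmetric function `e_i`. -/
noncomputable def eS (i : ℕ) : MvPowerSeries ℕ+ ℚ :=
  fun m => if ((m.sum fun _ k => k) = i ∧ ∀ j, m j ≤ 1) then 1 else 0

/-- `p_λ = p_{λ_1} ⋯ p_{λ_k}`. -/
noncomputable def pProd (l : List ℕ) : MvPowerSeries ℕ+ ℚ := (l.map pS).prod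
/-- `h_λ = h_{λ_1} ⋯ h_{λ_k}`. -/
noncomputable def hProd (l : List ℕ) : MvPowerSeries ℕ+ ℚ := (l.map hS).prod
/-- `e_λ = e_{λ_1} ⋯ e_{λ_k}`. -/
noncomputable def eProd (l : List ℕ) : MvPowerSeries ℕ+ ℚ := (l.map eS).prod

/-- The algebra `Sym` of symmetric functions, realized as the subalgebra of
`MvPowerSeries ℕ+ ℚ` generated by the elementary symmetric functions. -/
noncomputable def SymAlg : Subalgebra ℚ (MvPowerSeries ℕ+ ℚ) :=
  Algebra.adjoin ℚ {f | ∃ i : ℕ, f = eS (i + 1)}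

/-- Sort a list into weakly decreasing order (the underlying partition `α̃`). -/
def sortDesc (l : List ℕ) : List ℕ := List.insertionSort (· ≥ ·) l

/-- Partitions: weakly decreasing lists of positive integers. -/
abbrev PartL : Type := {l : List ℕ // l.Pairwise (· ≥ ·) ∧ ∀ x ∈ l, 0 < x}

/-! ## Compositions -/

/-- All coarsenings of a composition: lists obtained by summing adjacent blocks. -/
def coarsenings : List ℕ → List (List ℕ)
  | [] => [[]]
  | a :: l =>
    (coarsenings l).map (fun β => a :: β) ++
      (coarsenings l).filterMap (fun β =>
        match β with
        | [] => none
        | b :: β' => some ((a + b) :: β'))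

/-- The ribbon Schur function `r_α = ∑_{β ≽ α} (-1)^{ℓ(α) - ℓ(β)} h_{β̃}`. -/
noncomputable def ribbon (α : List ℕ) : MvPowerSeries ℕ+ ℚ :=
  ((coarsenings α).map fun β =>
    ((-1 : ℚ) ^ (α.length - β.length)) • hProd (sortDesc β)).sum

lemma sum_take_get_le (α : List ℕ) (b : Fin α.length) :
    (α.take b).sum + α.get b ≤ α.sum := by
  have h1 : (α.take (b + 1)).sum = (α.take b).sum + α[b] := List.sum_take_succ α b b.isLt
  have h2 : (α.take (b + 1)).sum ≤ α.sum := by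
    conv_rhs => rw [← List.take_append_drop (b + 1) α]
    rw [List.sum_append]
    exact Nat.le_add_right _ _
  simpa [List.get_eq_getElem, ← h1] using h2

/-- Shift a graph on `Fin m` by an offset `o` inside `Fin n`. -/
def shiftE {m n : ℕ} (o : ℕ) (h : o + m ≤ n) (E : Multiset (Sym2 (Fin m))) :
    Multiset (Sym2 (Fin n)) :=
  E.map (Sym2.map (fun v : Fin m => (⟨o + (v : ℕ), by have := v.isLt; omega⟩ : Fin n)))

/-- The labelled graph `G_{α_1} | G_{α_2} | ⋯ | G_{α_k}` on `Fin (α₁ + ⋯ + α_k)`: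
consecutive blocks of vertices carry the graphs `Gr (α_i)`. -/
noncomputable def concatE (α : List ℕ) (Gr : (k : ℕ) → Multiset (Sym2 (Fin k))) :
    Multiset (Sym2 (Fin α.sum)) :=
  ∑ b : Fin α.length,
    shiftE ((α.take b).sum) (sum_take_get_le α b) (Gr (α.get b))

/-- `set(α) = {α_1, α_1+α_2, …, α_1+⋯+α_{ℓ(α)-1}} ⊆ [n-1]`. -/
def setC (α : List ℕ) : Finset ℕ :=
  ((List.range (α.length - 1)).map (fun j => (α.take (j + 1)).sum)).toFinset

/-- The labelled graph on `Fin n` whose edges are `v_i v_{i+1}` for `i ∈ S` (1-based). -/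
def edgesFromSet (n : ℕ) (S : Finset ℕ) : Multiset (Sym2 (Fin n)) :=
  ((Finset.univ : Finset (Fin n × Fin n)).filter
    (fun p => (p.1 : ℕ) + 1 = (p.2 : ℕ) ∧ (p.2 : ℕ) ∈ S)).val.map (fun p => s(p.1, p.2))

/-- `γ = α^c`, the complement composition: the composition of `|α|` with
`set(γ) = [n-1] − set(α)`. -/
def IsComplementOf (γ α : List ℕ) : Prop :=
  (∀ x ∈ γ, 0 < x) ∧ γ.sum = α.sum ∧ setC γ = Finset.Ioo 0 α.sum \ setC α

/-- Near concatenation `α ⊙ β` of compositions. -/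
def nconcat : List ℕ → List ℕ → List ℕ
  | [], β => β
  | [a], [] => [a]
  | [a], b :: β => (a + b) :: β
  | a :: l, β => a :: nconcat l β

/-- `β^{⊙ i}`, the `i`-fold near concatenation of `β` with itself. -/
def npowOdot (β : List ℕ) : ℕ → List ℕ
  | 0 => []
  | i + 1 => nconcat (npowOdot β i) β

/-- Composition of compositions: `α ∘ β = β^{⊙α_1} · ⋯ · β^{⊙α_{ℓ(α)}}`. -/
def compOp (α β : List ℕ) : List ℕ := (α.map (npowOdot β)).flatten

/-- The equivalence `α ∼ β`: `α` and `β` have `∘`-factorizations whose factors agree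
up to reversal.  (`[1]` is a two-sided identity for `∘`, so the empty fold is harmless.) -/
def simRel (α β : List ℕ) : Prop :=
  ∃ L M : List (List ℕ),
    List.Forall₂ (fun γ δ => (γ ≠ [] ∧ ∀ x ∈ γ, 0 < x) ∧ (δ = γ ∨ δ = γ.reverse)) L M ∧
    α = L.foldr compOp [1] ∧ β = M.foldr compOp [1]

/-- A trivial factorization `α = β ∘ γ`. -/
def TrivialFac (β γ : List ℕ) : Prop :=
  β = [1] ∨ γ = [1] ∨ (β.length = 1 ∧ γ.length = 1) ∨
    ((∀ x ∈ β, x = 1) ∧ ∀ x ∈ γ, x = 1)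

/-- `L` is an irreducible factorization of `α`. -/
def IsIrreducibleFac (α : List ℕ) (L : List (List ℕ)) : Prop :=
  (∀ γ ∈ L, γ ≠ [] ∧ ∀ x ∈ γ, 0 < x) ∧
  α = L.foldr compOp [1] ∧
  (∀ i : ℕ, ∀ h : i + 1 < L.length,
    ¬ TrivialFac (L.get ⟨i, by omega⟩) (L.get ⟨i + 1, h⟩)) ∧
  (∀ γ ∈ L, ∀ δ ε : List ℕ, δ ≠ [] → (∀ x ∈ δ, 0 < x) → ε ≠ [] → (∀ x ∈ ε, 0 < x) →
    γ = compOp δ ε → TrivialFac δ ε)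

/-- All compositions of `n` (lists of positive integers with sum `n`). -/
def comps : ℕ → List (List ℕ)
  | 0 => [[]]
  | n + 1 => (List.range (n + 1)).attach.flatMap fun j =>
      (comps j.1).map (fun c => (n + 1 - j.1) :: c)
  decreasing_by exact List.mem_range.mp j.2

/-- All refinements `α ≼ λ` of a composition `λ`. -/
def refinements : List ℕ → List (List ℕ)
  | [] => [[]]
  | a :: l => (comps a).flatMap fun c => (refinements l).map (fun r => c ++ r)

/-- All compositions `α ⊆ λ`: `ℓ(α) = ℓ(λ)` and `1 ≤ α_i ≤ λ_i`. -/
def boundedLists : List ℕ → List (List ℕ)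
  | [] => [[]]
  | a :: l => (List.range a).flatMap fun j => (boundedLists l).map (fun r => (j + 1) :: r)

/-! ## Expansions of weighted graphs -/

/-- Given a decomposition `L` of `β` witnessing `β ≼ α`, vertex `a` of `H` is in the block
`R(v_v)` (0-based `v`) when `a` lies among the consecutively labelled vertices of block `v`. -/
def inBlock (L : List (List ℕ)) (v a : ℕ) : Prop :=
  ((L.take v).map List.length).sum ≤ a ∧ a < ((L.take (v + 1)).map List.length).sum

/-- The relation `a R b`: `a` and `b` lie in a common block `R(v)`. -/
def Rrel (L : List (List ℕ)) (a b : ℕ) : Prop :=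
  ∃ v : ℕ, inBlock L v a ∧ inBlock L v b

/-! ## The lattice of contractions and its Möbius function -/

/-- The restriction of the graph `E` to `B` is connected. -/
def ConnOn {V : Type*} (E : Multiset (Sym2 V)) (B : Set V) : Prop :=
  ∀ a ∈ B, ∀ b ∈ B, Relation.ReflTransGen (fun x y => x ∈ B ∧ y ∈ B ∧ s(x, y) ∈ E) a b

/-- A connected set partition of the graph `E` (as a setoid on the vertices). -/
def ConnPart {V : Type*} (E : Multiset (Sym2 V)) (σ : Setoid V) : Prop :=
  ∀ v : V, ConnOn E {u | σ.r u v}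

/-- The lattice of contractions `L_G`: connected set partitions ordered by refinement. -/
def LContr {V : Type*} (E : Multiset (Sym2 V)) : Type _ := {σ : Setoid V // ConnPart E σ}

noncomputable instance setoidFintype {V : Type*} [Fintype V] : Fintype (Setoid V) :=
  Fintype.ofInjective (fun s : Setoid V => s.r)
    (fun s t h => by cases s; cases t; simp only at h; subst h; rfl)

noncomputable instance {V : Type*} [Fintype V] (E : Multiset (Sym2 V)) : Fintype (LContr E) :=
  letI := Classical.decPred (ConnPart E)
  Subtype.fintype _

instance {V : Type*} (E : Multiset (Sym2 V)) : PartialOrder (LContr E) :=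
  Subtype.partialOrder _

noncomputable instance {V : Type*} [Fintype V] (E : Multiset (Sym2 V)) :
    LocallyFiniteOrder (LContr E) :=
  letI := Classical.decRel (α := LContr E) (· < ·)
  letI := Classical.decRel (α := LContr E) (· ≤ ·)
  Fintype.toLocallyFiniteOrder

/-- The Möbius function of the lattice of contractions. -/
noncomputable def mobLC {V : Type*} [Fintype V] (E : Multiset (Sym2 V))
    (x y : LContr E) : ℚ :=
  letI := Classical.decEq (LContr E)
  IncidenceAlgebra.mu ℚ x y

/-- `p_{type(π,w)}`: the product over the blocks of `π` of `p_{(total weight of block)}`. -/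
noncomputable def ptype {V : Type*} [Fintype V] (σ : Setoid V) (w : V → ℕ) :
    MvPowerSeries ℕ+ ℚ :=
  letI := Classical.decEq (Quotient σ)
  letI := @Quotient.fintype V _ σ (Classical.decRel _)
  ∏ c : Quotient σ, pS (∑ v : V, if Quotient.mk σ v = c then w v else 0)

/-- `0̂`, the minimal element of the lattice of contractions: each vertex is its own block. -/
def botLC {V : Type*} (E : Multiset (Sym2 V)) : LContr E :=
  ⟨⊥, by
    intro v a ha b hb
    have ha' : a = v := ha
    have hb' : b = v := hb
    subst ha'; subst hb'; exact Relation.ReflTransGen.refl⟩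

/-! ## Composition of a composition with a weighted graph -/

section comp
variable {V : Type*} [Fintype V]

/-- The gluing relation: for `i ∈ S` (1-based), identify the vertex `z` of copy `i`
with the vertex `a` of copy `i + 1` (0-based copies `i - 1` and `i`). -/
def glueRel (a z : V) (n : ℕ) (S : Finset ℕ) : (Fin n × V) → (Fin n × V) → Prop :=
  fun x y => ∃ i ∈ S, ∃ (h1 : i - 1 < n) (h2 : i < n),
    x = (⟨i - 1, h1⟩, z) ∧ y = (⟨i, h2⟩, a)

def glueSetoid (a z : V) (n : ℕ) (S : Finset ℕ) : Setoid (Fin n × V) :=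
  Relation.EqvGen.setoid (glueRel a z n S)

/-- Vertices of the graph obtained from `n` copies of a graph on `V` by contracting the
connecting edges `z_i a_{i+1}`, `i ∈ S`. -/
def compV (a z : V) (n : ℕ) (S : Finset ℕ) : Type _ := Quotient (glueSetoid a z n S)

noncomputable instance (a z : V) (n : ℕ) (S : Finset ℕ) : Fintype (compV a z n S) :=
  @Quotient.fintype _ _ (glueSetoid a z n S) (Classical.decRel _)

/-- Edges: all edges of the `n` copies of `E`, together with the connecting edges
`z_i a_{i+1}` for `i ∈ [n-1] − S` (the ones not contracted). -/
noncomputable def compE (E : Multiset (Sym2 V)) (a z : V) (n : ℕ) (S : Finset ℕ) :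
    Multiset (Sym2 (compV a z n S)) :=
  (∑ i : Fin n, E.map (Sym2.map fun v =>
      (Quotient.mk (glueSetoid a z n S) (i, v) : compV a z n S)))
  + ((Finset.Ioo 0 n \ S).attach.val.map fun i =>
      s((Quotient.mk (glueSetoid a z n S)
          (⟨i.1 - 1, by
            have := i.2; simp only [Finset.mem_sdiff, Finset.mem_Ioo] at this; omega⟩, z) :
            compV a z n S),
        (Quotient.mk (glueSetoid a z n S)
          (⟨i.1, by
            have := i.2; simp only [Finset.mem_sdiff, Finset.mem_Ioo] at this; omega⟩, a) :
            compV a z n S)))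

/-- Weights: a contracted vertex receives the sum of the weights of its constituents. -/
noncomputable def compW (w : V → ℕ) (a z : V) (n : ℕ) (S : Finset ℕ) :
    compV a z n S → ℕ :=
  fun c => ∑ x : Fin n × V,
    if (Quotient.mk (glueSetoid a z n S) x : compV a z n S) = c then w x.2 else 0

/-- `X_{α ∘ (G,w)}`: take `|α|` copies of `(G,w)`, join successive copies by edges
`z_i a_{i+1}`, and contract exactly the connecting edges with `i ∈ set(α^c)`. -/
noncomputable def Xcomp (E : Multiset (Sym2 V)) (w : V → ℕ) (a z : V) (α : List ℕ) :
    MvPowerSeries ℕ+ ℚ :=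
  X (compE E a z α.sum (Finset.Ioo 0 α.sum \ setC α))
    (compW w a z α.sum (Finset.Ioo 0 α.sum \ setC α))

end comp


/-! ### Auxiliary lemmas for the inclusion–exclusion theorem -/

section IEAux

variable {V : Type*}

lemma proper_iff_forall (E : Multiset (Sym2 V)) {C : Type*} (κ : V → C) :
    Proper E κ ↔ ∀ e ∈ E, ¬ (e.map κ).IsDiag := by
  constructor
  · intro h e he
    induction e using Sym2.ind with
    | _ u v => simpa [Sym2.map_pair_eq, Sym2.mk_isDiag_iff] using h u v he
  · intro h u v huv
    simpa [Sym2.map_pair_eq, Sym2.mk_isDiag_iff] using h _ huv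

lemma proper_add_iff (E F : Multiset (Sym2 V)) {C : Type*} (κ : V → C) :
    Proper (E + F) κ ↔ Proper E κ ∧ Proper F κ := by
  simp only [proper_iff_forall, Multiset.mem_add]
  constructor
  · exact fun h => ⟨fun e he => h e (Or.inl he), fun e he => h e (Or.inr he)⟩
  · rintro ⟨h1, h2⟩ e (he | he)
    exacts [h1 e he, h2 e he]

lemma sum_map_neg' {σ : Type*} (s : Multiset σ) (f : σ → ℚ) :
    (s.map fun x => -f x).sum = -(s.map f).sum := by
  induction s using Multiset.induction with
  | empty => simp
  | cons a s ih =>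
    rw [Multiset.map_cons, Multiset.sum_cons, Multiset.map_cons, Multiset.sum_cons, ih]
    ring

lemma sum_map_finsetSum {σ ι : Type*} (s : Multiset σ) (t : Finset ι) (f : σ → ι → ℚ) :
    (s.map fun x => ∑ y ∈ t, f x y).sum = ∑ y ∈ t, (s.map fun x => f x y).sum := by
  induction s using Multiset.induction with
  | empty => simp
  | cons a s ih => simp [ih, Finset.sum_add_distrib]

lemma sum_map_mul_left' {σ : Type*} (s : Multiset σ) (c : ℚ) (f : σ → ℚ) :
    (s.map fun x => c * f x).sum = c * (s.map f).sum := by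
  induction s using Multiset.induction with
  | empty => simp
  | cons a s ih => simp [ih]; ring

lemma sign_sum {C : Type*} (κ : V → C) (T : Multiset (Sym2 V)) :
    ((T.powerset).map fun S =>
        ((-1 : ℚ) ^ Multiset.card S) * (if Proper S κ then 1 else 0)).sum
      = if ∀ e ∈ T, (Sym2.map κ e).IsDiag then 1 else 0 := by
  induction T using Multiset.induction with
  | empty =>
    have : Proper (0 : Multiset (Sym2 V)) κ := by
      intro u v h; simp at h
    simp [this]
  | cons a T ih =>
    rw [Multiset.powerset_cons, Multiset.map_add, Multiset.sum_add, Multiset.map_map]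
    by_cases ha : (Sym2.map κ a).IsDiag
    · have h2 : ∀ x ∈ (T.powerset.map ((fun S => ((-1:ℚ) ^ Multiset.card S) *
          (if Proper S κ then 1 else 0)) ∘ (a ::ₘ ·))), x = 0 := by
        intro x hx
        obtain ⟨S, _, rfl⟩ := Multiset.mem_map.1 hx
        have : ¬ Proper (a ::ₘ S) κ := by
          rw [proper_iff_forall]
          push_neg
          exact ⟨a, Multiset.mem_cons_self a S, ha⟩
        simp [Function.comp, this]
      rw [Multiset.sum_eq_zero h2, add_zero, ih]
      simp [Multiset.forall_mem_cons, ha]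
    · have h2 : ∀ S ∈ T.powerset,
          ((fun S => ((-1:ℚ) ^ Multiset.card S) * (if Proper S κ then 1 else 0)) ∘ (a ::ₘ ·)) S
            = -(((-1:ℚ) ^ Multiset.card S) * (if Proper S κ then 1 else 0)) := by
        intro S _
        have hp : Proper (a ::ₘ S) κ ↔ Proper S κ := by
          simp [proper_iff_forall, Multiset.forall_mem_cons, ha]
        simp only [Function.comp, Multiset.card_cons, pow_succ, hp]
        ring
      have h3 : (T.powerset.map ((fun S => ((-1:ℚ) ^ Multiset.card S) *
            (if Proper S κ then 1 else 0)) ∘ (a ::ₘ ·))).sum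
          = -((T.powerset.map fun S => ((-1:ℚ) ^ Multiset.card S) *
            (if Proper S κ then 1 else 0)).sum) := by
        rw [← sum_map_neg']
        exact congrArg Multiset.sum (Multiset.map_congr rfl h2)
      have h4 : ¬ ∀ e ∈ a ::ₘ T, (Sym2.map κ e).IsDiag := by
        intro h; exact ha (h a (Multiset.mem_cons_self a T))
      rw [h3]
      simp [ha]

/-- Offsets of the blocks of a decomposition. -/
def offL (L : List (List ℕ)) (v : ℕ) : ℕ := ((L.map List.length).take v).sum

lemma offL_mono (L : List (List ℕ)) {v w : ℕ} (h : v ≤ w) : offL L v ≤ offL L w := by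
  unfold offL
  have h1 : (L.map List.length).take v = ((L.map List.length).take w).take v := by
    rw [List.take_take, Nat.min_eq_left h]
  rw [h1]
  conv_rhs => rw [← List.take_append_drop v ((L.map List.length).take w)]
  rw [List.sum_append]
  omega

lemma offL_succ (L : List (List ℕ)) {v : ℕ} (hv : v < L.length) :
    offL L (v + 1) = offL L v + (L.get ⟨v, hv⟩).length := by
  unfold offL
  rw [List.sum_take_succ _ v (by simpa using hv)]
  simp

lemma offL_of_le (L : List (List ℕ)) {v : ℕ} (hv : L.length ≤ v) :
    offL L v = (L.map List.length).sum := by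
  unfold offL
  rw [List.take_of_length_le (by simpa using hv)]

lemma inBlock_iff (L : List (List ℕ)) (v a : ℕ) :
    inBlock L v a ↔ offL L v ≤ a ∧ a < offL L (v + 1) := by
  unfold inBlock offL
  rw [List.map_take, List.map_take]

lemma inBlock_unique {L : List (List ℕ)} {v w a : ℕ}
    (hv : inBlock L v a) (hw : inBlock L w a) : v = w := by
  rw [inBlock_iff] at hv hw
  by_contra hne
  rcases Nat.lt_or_ge v w with h | h
  · have := offL_mono L (show v + 1 ≤ w by omega)
    omega
  · have h' : w < v := lt_of_le_of_ne h (Ne.symm hne)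
    have := offL_mono L (show w + 1 ≤ v by omega)
    omega

lemma exists_inBlock (L : List (List ℕ)) (a : ℕ) (ha : a < (L.map List.length).sum) :
    ∃ v < L.length, inBlock L v a := by
  induction L generalizing a with
  | nil => simp at ha
  | cons l L ih =>
    by_cases h : a < l.length
    · refine ⟨0, by simp, ?_⟩
      rw [inBlock_iff]
      refine ⟨by simp [offL], ?_⟩
      simpa [offL] using h
    · have hsum : l.length + (L.map List.length).sum = ((l :: L).map List.length).sum := by
        simp
      obtain ⟨v, hvlen, hv⟩ := ih (a - l.length) (by omega)
      rw [inBlock_iff] at hv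
      refine ⟨v + 1, by simpa using Nat.succ_lt_succ hvlen, ?_⟩
      rw [inBlock_iff]
      have h1 : offL (l :: L) (v + 1) = l.length + offL L v := by
        simp [offL]
      have h2 : offL (l :: L) (v + 1 + 1) = l.length + offL L (v + 1) := by
        simp [offL]
      omega

lemma flatten_getD (L : List (List ℕ)) : ∀ (v : ℕ) (hv : v < L.length) (j : ℕ),
    j < (L.get ⟨v, hv⟩).length →
    L.flatten.getD (offL L v + j) 0 = (L.get ⟨v, hv⟩).getD j 0 := by
  induction L with
  | nil => intro v hv; simp at hv
  | cons l L ih =>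
    intro v hv j hj
    cases v with
    | zero =>
      have hoff : offL (l :: L) 0 = 0 := rfl
      rw [hoff, Nat.zero_add, List.flatten_cons,
        List.getD_append _ _ _ _ (by simpa using hj)]
      rfl
    | succ v =>
      have hvL : v < L.length := by simpa using Nat.lt_of_succ_lt_succ hv
      have hoff : offL (l :: L) (v + 1) = l.length + offL L v := by
        simp [offL]
      rw [hoff, List.flatten_cons, Nat.add_assoc,
        List.getD_append_right _ _ _ _ (Nat.le_add_right _ _), Nat.add_sub_cancel_left]
      exact ih v hvL j (by simpa using hj)

lemma sum_range_getD (l : List ℕ) :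
    ∑ j ∈ Finset.range l.length, l.getD j 0 = l.sum := by
  induction l with
  | nil => simp
  | cons a l ih =>
    rw [List.length_cons, Finset.sum_range_succ']
    simp only [List.getD_cons_succ, List.getD_cons_zero]
    rw [ih, List.sum_cons, Nat.add_comm]

lemma const_of_mono {C : Type*} {E : Multiset (Sym2 V)} {κ : V → C}
    (hmono : ∀ e ∈ E, (Sym2.map κ e).IsDiag) {a b : V}
    (h : Relation.ReflTransGen (fun x y => s(x, y) ∈ E) a b) : κ a = κ b := by
  induction h with
  | refl => rfl
  | tail _ hstep ih =>
    have hd := hmono _ hstep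
    rw [Sym2.map_pair_eq, Sym2.mk_isDiag_iff] at hd
    rw [ih, hd]

/-- Finiteness of the set of colourings with a fixed monomial, when all weights are
positive. -/
noncomputable def monFintype {n : ℕ} (w : Fin n → ℕ) (hw : ∀ i, 0 < w i) (m : ℕ+ →₀ ℕ) :
    Fintype {κ : Fin n → ℕ+ // mon w κ = m} := by
  have key : ∀ (κ : Fin n → ℕ+), mon w κ = m → ∀ a : Fin n, κ a ∈ m.support := by
    intro κ hκ a
    rw [Finsupp.mem_support_iff]
    subst hκ
    have h0 : (mon w κ) (κ a) = ∑ v, (Finsupp.single (κ v) (w v)) (κ a) := by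
      rw [mon]
      exact map_sum (Finsupp.applyAddHom (κ a)) _ _
    rw [h0]
    have h1 : (Finsupp.single (κ a) (w a)) (κ a) = w a := Finsupp.single_eq_same
    have h2 : (Finsupp.single (κ a) (w a)) (κ a) ≤ ∑ v, (Finsupp.single (κ v) (w v)) (κ a) :=
      Finset.single_le_sum (f := fun v => (Finsupp.single (κ v) (w v)) (κ a))
        (fun v _ => Nat.zero_le _) (Finset.mem_univ a)
    have := hw a
    omega
  exact Fintype.ofInjective
    (fun y => (fun a => (⟨y.1 a, key y.1 y.2 a⟩ : {j : ℕ+ // j ∈ m.support})))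
    (by
      intro y z h
      apply Subtype.ext
      funext a
      exact congrArg Subtype.val (congrFun h a))

lemma natCard_eq_sum {n : ℕ} (w : Fin n → ℕ) (m : ℕ+ →₀ ℕ)
    [Fintype {κ : Fin n → ℕ+ // mon w κ = m}]
    (P : (Fin n → ℕ+) → Prop) :
    (Nat.card {κ : Fin n → ℕ+ // P κ ∧ mon w κ = m} : ℚ)
      = ∑ y : {κ : Fin n → ℕ+ // mon w κ = m}, if P y.1 then (1 : ℚ) else 0 := by
  have e : {κ : Fin n → ℕ+ // P κ ∧ mon w κ = m}
      ≃ {y : {κ : Fin n → ℕ+ // mon w κ = m} // P y.1} :=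
    ((Equiv.subtypeSubtypeEquivSubtypeInter _ _).trans
      (Equiv.subtypeEquivRight fun x => and_comm)).symm
  rw [Nat.card_congr e, Nat.card_eq_fintype_card, Fintype.card_subtype, Finset.card_filter]
  rw [Nat.cast_sum]
  exact Finset.sum_congr rfl fun y _ => by split <;> simp

lemma mon_blk (L : List (List ℕ)) (α β : List ℕ) (hLjoin : L.flatten = β)
    (hLsum : α = L.map List.sum)
    (blk : Fin β.length → Fin α.length)
    (hblk : ∀ a, inBlock L ((blk a : Fin α.length) : ℕ) (a : ℕ))
    (κ : Fin α.length → ℕ+) :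
    mon (fun a => β.get a) (fun a => κ (blk a)) = mon (fun v => α.get v) κ := by
  classical
  have hlen : α.length = L.length := by rw [hLsum, List.length_map]
  have hβlen : β.length = (L.map List.length).sum := by
    rw [← hLjoin, List.length_flatten]
  rw [mon, mon,
    ← Finset.sum_fiberwise_of_maps_to (g := blk) (t := Finset.univ)
      (fun a _ => Finset.mem_univ (blk a))]
  refine Finset.sum_congr rfl fun v _ => ?_
  have hvL : (v : ℕ) < L.length := hlen ▸ v.isLt
  have hmem : ∀ a ∈ Finset.univ.filter (fun a => blk a = v),
      Finsupp.single (κ (blk a)) (β.get a) = Finsupp.single (κ v) (β.get a) := by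
    intro a ha
    rw [(Finset.mem_filter.1 ha).2]
  rw [Finset.sum_congr rfl hmem,
    ← Finsupp.single_finset_sum (Finset.univ.filter (fun a => blk a = v)) (fun a => β.get a) (κ v)]
  have hfiber : (∑ a ∈ Finset.univ.filter (fun a => blk a = v), β.get a) = α.get v := by
    set k := offL L (v : ℕ) with hk
    set len := (L.get ⟨(v : ℕ), hvL⟩).length with hlendef
    have hk1 : k + len = offL L ((v : ℕ) + 1) := (offL_succ L hvL).symm
    have hk2 : offL L ((v : ℕ) + 1) ≤ β.length := by
      rw [hβlen, ← offL_of_le L (le_refl L.length)]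
      exact offL_mono L hvL
    have hchar : ∀ a : Fin β.length, blk a = v ↔ k ≤ (a : ℕ) ∧ (a : ℕ) < k + len := by
      intro a
      constructor
      · intro h
        have := hblk a
        rw [h, inBlock_iff] at this
        omega
      · intro h
        have hin : inBlock L (v : ℕ) (a : ℕ) := by
          rw [inBlock_iff]
          omega
        exact Fin.ext (inBlock_unique (hblk a) hin)
    have hsum1 : (∑ a ∈ Finset.univ.filter (fun a => blk a = v), β.get a)
        = ∑ j ∈ Finset.range len, β.getD (k + j) 0 := by
      refine Finset.sum_bij' (i := fun (a : Fin β.length) _ => (a : ℕ) - k)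
        (j := fun j hj => (⟨k + j, by
          have := Finset.mem_range.1 hj
          omega⟩ : Fin β.length)) ?_ ?_ ?_ ?_ ?_
      · intro a ha
        have h1 := (hchar a).1 (Finset.mem_filter.1 ha).2
        rw [Finset.mem_range]
        show (a : ℕ) - k < len
        omega
      · intro j hj
        have hjr := Finset.mem_range.1 hj
        rw [Finset.mem_filter]
        refine ⟨Finset.mem_univ _, (hchar _).2 ⟨?_, ?_⟩⟩
        · show k ≤ k + j
          omega
        · show k + j < k + len
          omega
      · intro a ha
        have h1 := (hchar a).1 (Finset.mem_filter.1 ha).2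
        apply Fin.ext
        show k + ((a : ℕ) - k) = (a : ℕ)
        omega
      · intro j hj
        have hjr := Finset.mem_range.1 hj
        show k + j - k = j
        omega
      · intro a ha
        have h1 := (hchar a).1 (Finset.mem_filter.1 ha).2
        show β.get a = β.getD (k + ((a : ℕ) - k)) 0
        have h2 : k + ((a : ℕ) - k) = (a : ℕ) := by omega
        rw [h2, List.getD_eq_getElem _ _ a.isLt]
        simp [List.get_eq_getElem]
    have hsum2 : ∀ j ∈ Finset.range len, β.getD (k + j) 0 = (L.get ⟨(v : ℕ), hvL⟩).getD j 0 := by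
      intro j hj
      rw [← hLjoin]
      exact flatten_getD L (v : ℕ) hvL j (Finset.mem_range.1 hj)
    rw [hsum1, Finset.sum_congr rfl hsum2, hlendef, sum_range_getD]
    have hval : α.get v = (L.get ⟨(v : ℕ), hvL⟩).sum := by
      have h3 : α.get v = α[(v : ℕ)]'(v.isLt) := rfl
      rw [h3]
      simp only [hLsum, List.getElem_map]
      simp [List.get_eq_getElem]
    rw [hval]
  rw [hfiber]

lemma multiset_sum_apply_mv (s : Multiset (MvPowerSeries ℕ+ ℚ)) (m : ℕ+ →₀ ℕ) :
    s.sum m = (s.map fun f => f m).sum := by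
  induction s using Multiset.induction with
  | empty => rfl
  | cons a s ih =>
    rw [Multiset.sum_cons, Multiset.map_cons, Multiset.sum_cons, ← ih]
    rfl

end IEAux

/-- **Theorem (inclusion–exclusion for expansions).**
Let `(G,α)` be a weighted graph with expansion `(H,β)` (witnessed by the decomposition `L`
of `β` into consecutive blocks whose sums give `α`), and let `E'` be a multiset of edges on
the vertices of `H` such that two vertices of `H` lie in the same connected component of
`(V(H), E')` iff they are `R`-related.  Then
`X_{(G,α)} = ∑_{S ⊆ E'} (-1)^{|S|} X_{(H+S,β)}`. -/
theorem extended_chromatic_inclusion_exclusion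
    (α β : List ℕ) (hαpos : ∀ x ∈ α, 0 < x) (hβpos : ∀ x ∈ β, 0 < x)
    (EG : Multiset (Sym2 (Fin α.length))) (EH : Multiset (Sym2 (Fin β.length)))
    (L : List (List ℕ)) (hLjoin : L.flatten = β) (hLne : ∀ l ∈ L, l ≠ [])
    (hLsum : α = L.map List.sum)
    (hexpansion : ∀ u v : Fin α.length,
      s(u, v) ∈ EG ↔ ∃ a b : Fin β.length,
        s(a, b) ∈ EH ∧ inBlock L (u : ℕ) (a : ℕ) ∧ inBlock L (v : ℕ) (b : ℕ))
    (E' : Multiset (Sym2 (Fin β.length)))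
    (hE' : ∀ a b : Fin β.length,
      Relation.ReflTransGen (fun x y : Fin β.length => s(x, y) ∈ E') a b ↔
        Rrel L (a : ℕ) (b : ℕ)) :
    X EG (fun i => α.get i) =
      (E'.powerset.map fun S =>
        ((-1 : ℚ) ^ Multiset.card S) • X (EH + S) (fun i => β.get i)).sum := by
  classical
  have hlen : α.length = L.length := by rw [hLsum, List.length_map]
  have hβlen : β.length = (L.map List.length).sum := by
    rw [← hLjoin, List.length_flatten]
  have hex : ∀ a : Fin β.length, ∃ v, v < L.length ∧ inBlock L v (a : ℕ) := by
    intro a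
    obtain ⟨v, hv1, hv2⟩ := exists_inBlock L (a : ℕ) (hβlen ▸ a.isLt)
    exact ⟨v, hv1, hv2⟩
  choose blkN hblkN hblkIn using hex
  have hblkN' : ∀ a, blkN a < α.length := fun a => by rw [hlen]; exact hblkN a
  set blk : Fin β.length → Fin α.length := fun a => ⟨blkN a, hblkN' a⟩ with hblkdef
  have hblk : ∀ a, inBlock L ((blk a : Fin α.length) : ℕ) (a : ℕ) := fun a => hblkIn a
  have hvL : ∀ v : Fin α.length, (v : ℕ) < L.length := fun v => hlen ▸ v.isLt
  have hlenpos : ∀ v : Fin α.length, 0 < (L.get ⟨(v : ℕ), hvL v⟩).length := by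
    intro v
    exact List.length_pos_iff.2 (hLne _ (List.get_mem _ _))
  have hoffb : ∀ v : Fin α.length, offL L (v : ℕ) < β.length := by
    intro v
    have h1 := offL_succ L (hvL v)
    have h2 : offL L ((v : ℕ) + 1) ≤ β.length := by
      rw [hβlen, ← offL_of_le L (le_refl L.length)]
      exact offL_mono L (hvL v)
    have := hlenpos v
    omega
  set rep : Fin α.length → Fin β.length := fun v => ⟨offL L (v : ℕ), hoffb v⟩ with hrepdef
  have hrepIn : ∀ v : Fin α.length, inBlock L (v : ℕ) ((rep v : Fin β.length) : ℕ) := by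
    intro v
    rw [inBlock_iff]
    have h1 := offL_succ L (hvL v)
    have h2 := hlenpos v
    show offL L (v : ℕ) ≤ offL L (v : ℕ) ∧ offL L (v : ℕ) < offL L ((v : ℕ) + 1)
    omega
  have hbr : ∀ v : Fin α.length, blk (rep v) = v :=
    fun v => Fin.ext (inBlock_unique (hblk (rep v)) (hrepIn v))
  have hEblk : ∀ {x y : Fin β.length}, s(x, y) ∈ E' → blk x = blk y := by
    intro x y hxy
    obtain ⟨t, h1, h2⟩ := (hE' x y).1 (Relation.ReflTransGen.single hxy)
    exact Fin.ext ((inBlock_unique (hblk x) h1).trans (inBlock_unique h2 (hblk y)))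
  have hconst : ∀ (κ : Fin β.length → ℕ+), (∀ e ∈ E', (Sym2.map κ e).IsDiag) →
      ∀ a : Fin β.length, κ (rep (blk a)) = κ a := by
    intro κ hmono a
    have hr : Rrel L ((rep (blk a) : Fin β.length) : ℕ) (a : ℕ) :=
      ⟨((blk a : Fin α.length) : ℕ), hrepIn (blk a), hblk a⟩
    exact const_of_mono hmono ((hE' _ _).2 hr)
  funext m
  haveI : Fintype {κ : Fin β.length → ℕ+ // mon (fun i => β.get i) κ = m} :=
    monFintype _ (fun i => hβpos _ (List.get_mem _ _)) m
  -- the equivalence between proper colourings of `G` and mighty colourings of `H`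
  have Φ : {κ' : Fin α.length → ℕ+ // Proper EG κ' ∧ mon (fun i => α.get i) κ' = m} ≃
      {κ : Fin β.length → ℕ+ //
        (Proper EH κ ∧ ∀ e ∈ E', (Sym2.map κ e).IsDiag) ∧
          mon (fun i => β.get i) κ = m} := by
    refine Equiv.mk
      (fun x => ⟨fun a => x.1 (blk a), ⟨⟨?_, ?_⟩, ?_⟩⟩)
      (fun y => ⟨fun v => y.1 (rep v), ⟨?_, ?_⟩⟩) ?_ ?_
    · -- Proper EH
      intro a b hab
      have hG : s(blk a, blk b) ∈ EG :=
        (hexpansion (blk a) (blk b)).2 ⟨a, b, hab, hblk a, hblk b⟩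
      exact x.2.1 _ _ hG
    · -- monochromatic on E'
      intro e
      induction e using Sym2.ind with
      | _ u v =>
        intro he
        rw [Sym2.map_pair_eq, Sym2.mk_isDiag_iff]
        exact congrArg x.1 (hEblk he)
    · -- monomial
      rw [mon_blk L α β hLjoin hLsum blk hblk x.1]
      exact x.2.2
    · -- Proper EG
      intro u v huv
      obtain ⟨a, b, hab, hua, hvb⟩ := (hexpansion u v).1 huv
      show y.1 (rep u) ≠ y.1 (rep v)
      have h1 : y.1 (rep u) = y.1 a :=
        const_of_mono y.2.1.2 ((hE' _ _).2 ⟨(u : ℕ), hrepIn u, hua⟩)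
      have h2 : y.1 (rep v) = y.1 b :=
        const_of_mono y.2.1.2 ((hE' _ _).2 ⟨(v : ℕ), hrepIn v, hvb⟩)
      rw [h1, h2]
      exact y.2.1.1 a b hab
    · -- monomial
      have h0 := mon_blk L α β hLjoin hLsum blk hblk (fun v => y.1 (rep v))
      have h1 : (fun a => y.1 (rep (blk a))) = y.1 := funext (hconst y.1 y.2.1.2)
      rw [← h0, h1]
      exact y.2.2
    · -- left inverse
      intro x
      apply Subtype.ext
      funext v
      show x.1 (blk (rep v)) = x.1 v
      rw [hbr v]
    · -- right inverse
      intro y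
      apply Subtype.ext
      funext a
      exact hconst y.1 y.2.1.2 a
  have hRHS : (E'.powerset.map fun S =>
        ((-1 : ℚ) ^ Multiset.card S) • X (EH + S) (fun i => β.get i)).sum m
      = (E'.powerset.map fun S => ((-1 : ℚ) ^ Multiset.card S) *
          (Nat.card {κ : Fin β.length → ℕ+ //
            Proper (EH + S) κ ∧ mon (fun i => β.get i) κ = m} : ℚ)).sum := by
    rw [multiset_sum_apply_mv, Multiset.map_map]
    apply congrArg Multiset.sum
    apply Multiset.map_congr rfl
    intro S _
    rfl
  calc X EG (fun i => α.get i) m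
      = (Nat.card {κ' : Fin α.length → ℕ+ //
          Proper EG κ' ∧ mon (fun i => α.get i) κ' = m} : ℚ) := rfl
    _ = (Nat.card {κ : Fin β.length → ℕ+ //
          (Proper EH κ ∧ ∀ e ∈ E', (Sym2.map κ e).IsDiag) ∧
            mon (fun i => β.get i) κ = m} : ℚ) := by rw [Nat.card_congr Φ]
    _ = ∑ y : {κ : Fin β.length → ℕ+ // mon (fun i => β.get i) κ = m},
          if (Proper EH y.1 ∧ ∀ e ∈ E', (Sym2.map y.1 e).IsDiag) then (1 : ℚ) else 0 := by
        rw [natCard_eq_sum]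
        exact Finset.sum_congr rfl fun y _ => by congr
    _ = ∑ y : {κ : Fin β.length → ℕ+ // mon (fun i => β.get i) κ = m},
          (if Proper EH y.1 then (1 : ℚ) else 0) *
            ((E'.powerset.map fun S => ((-1 : ℚ) ^ Multiset.card S) *
              (if Proper S y.1 then 1 else 0)).sum) := by
        refine Finset.sum_congr rfl fun y _ => ?_
        rw [sign_sum]
        by_cases h1 : Proper EH y.1 <;>
          by_cases h2 : ∀ e ∈ E', (Sym2.map y.1 e).IsDiag <;> simp [h1, h2]
    _ = ∑ y : {κ : Fin β.length → ℕ+ // mon (fun i => β.get i) κ = m},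
          (E'.powerset.map fun S =>
            (if Proper EH y.1 then (1 : ℚ) else 0) * (((-1 : ℚ) ^ Multiset.card S) *
              (if Proper S y.1 then 1 else 0))).sum := by
        refine Finset.sum_congr rfl fun y _ => ?_
        rw [sum_map_mul_left']
    _ = (E'.powerset.map fun S =>
          ∑ y : {κ : Fin β.length → ℕ+ // mon (fun i => β.get i) κ = m},
            (if Proper EH y.1 then (1 : ℚ) else 0) * (((-1 : ℚ) ^ Multiset.card S) *
              (if Proper S y.1 then 1 else 0))).sum :=
        (sum_map_finsetSum _ _ _).symm
    _ = (E'.powerset.map fun S => ((-1 : ℚ) ^ Multiset.card S) *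
          ∑ y : {κ : Fin β.length → ℕ+ // mon (fun i => β.get i) κ = m},
            (if Proper (EH + S) y.1 then (1 : ℚ) else 0)).sum := by
        apply congrArg Multiset.sum
        apply Multiset.map_congr rfl
        intro S _
        rw [Finset.mul_sum]
        refine Finset.sum_congr rfl fun y _ => ?_
        by_cases h1 : Proper EH y.1 <;> by_cases h2 : Proper S y.1 <;>
          simp [h1, h2, proper_add_iff]
    _ = (E'.powerset.map fun S => ((-1 : ℚ) ^ Multiset.card S) *
          (Nat.card {κ : Fin β.length → ℕ+ //
            Proper (EH + S) κ ∧ mon (fun i => β.get i) κ = m} : ℚ)).sum := by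
        apply congrArg Multiset.sum
        apply Multiset.map_congr rfl
        intro S _
        rw [natCard_eq_sum]
    _ = (E'.powerset.map fun S =>
          ((-1 : ℚ) ^ Multiset.card S) • X (EH + S) (fun i => β.get i)).sum m :=
        hRHS.symm

end CSF
end

section
/- (k-deletion) Let (G,α) be a weighted graph containing a cycle C on k vertices, and let ε be a fixed edge of this cycle. Then Σ_{S ⊆ E(C)−ε} (−1)^{|S|} X_{(G−S,α)} = 0, where G−S is the graph obtained from G by deleting the edges of S. -/
open scoped BigOperators
open scoped Classical

namespace CSF

private lemma swap_lemma {β γ : Type*} (M : Multiset β) (K : Finset γ) (f : β → γ → ℚ) :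
    (M.map (fun S => ∑ κ ∈ K, f S κ)).sum = ∑ κ ∈ K, (M.map (fun S => f S κ)).sum := by
  induction M using Multiset.induction with
  | empty => simp
  | cons a s ih => simp [ih, Finset.sum_add_distrib]

private lemma toggle_lemma {β : Type*} [DecidableEq β] (T : Multiset β) (e : β) (he : e ∈ T)
    (h : Multiset β → ℚ) (hh : ∀ S, h (e ::ₘ S) = - h S) :
    (T.powerset.map h).sum = 0 := by
  rw [← Multiset.cons_erase he, Multiset.powerset_cons, Multiset.map_add,
    Multiset.sum_add, Multiset.map_map]
  rw [Multiset.map_congr rfl (fun S _ => by simpa using hh S :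
    ∀ S ∈ (T.erase e).powerset, (h ∘ (e ::ₘ ·)) S = (fun S => - h S) S)]
  simp [Multiset.sum_map_neg']

private lemma chain_lemma (k : ℕ) (hk : 0 < k) {V : Type*} (c : Fin k → V) {C : Type*}
    (κ : V → C) (i0 : Fin k)
    (hbad : ∀ i : Fin k, i ≠ i0 → κ (c i) = κ (c ⟨((i:ℕ)+1)%k, Nat.mod_lt _ hk⟩)) :
    κ (c i0) = κ (c ⟨((i0:ℕ)+1)%k, Nat.mod_lt _ hk⟩) := by
  have key : ∀ j, j < k →
      κ (c ⟨((i0:ℕ)+1+j) % k, Nat.mod_lt _ hk⟩) = κ (c ⟨((i0:ℕ)+1) % k, Nat.mod_lt _ hk⟩) := by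
    intro j
    induction j with
    | zero => intro _; rfl
    | succ j ih =>
      intro hj1
      have hj : j < k := by omega
      set a : ℕ := (i0:ℕ)+1+j with ha
      have hne : (⟨a % k, Nat.mod_lt _ hk⟩ : Fin k) ≠ i0 := by
        intro h
        have h' : a % k = (i0:ℕ) % k := by
          rw [Nat.mod_eq_of_lt i0.isLt]; exact congrArg Fin.val h
        have : (1 + j) % k = 0 % k := Nat.ModEq.add_left_cancel' (i0:ℕ) (by
          show Nat.ModEq k ((i0:ℕ) + (1+j)) ((i0:ℕ) + 0); rw [Nat.add_zero, ← Nat.add_assoc]; exact h')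
        have hdvd : k ∣ 1 + j := (Nat.modEq_zero_iff_dvd).mp this
        have := Nat.le_of_dvd (by omega) hdvd
        omega
      have step := hbad _ hne
      have harith : (a % k + 1) % k = ((i0:ℕ) + 1 + (j+1)) % k := by
        rw [show (i0:ℕ) + 1 + (j+1) = a + 1 by omega, Nat.add_mod a 1 k,
          Nat.mod_eq_of_lt (show 1 < k by omega)]
      rw [← ih hj, step]
      congr 1
      exact congrArg c (Fin.ext harith.symm)
  have := key (k-1) (by omega)
  have h2 : ((i0:ℕ)+1+(k-1)) % k = (i0:ℕ) % k := by
    rw [show (i0:ℕ)+1+(k-1) = (i0:ℕ) + k by omega, Nat.add_mod_right]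
  have h3 : (⟨((i0:ℕ)+1+(k-1)) % k, Nat.mod_lt _ hk⟩ : Fin k) = i0 :=
    Fin.ext (by simpa using h2.trans (Nat.mod_eq_of_lt i0.isLt))
  rw [h3] at this
  exact this

/-- **Theorem (k-deletion).**
Let `(G,α)` be a weighted graph containing a cycle `C` on `k` vertices
(`c : Fin k → V` injective, with edge multiset `EC ≤ E(G)`), and let `ε` be a fixed edge
of this cycle.  Then `∑_{S ⊆ E(C) − ε} (-1)^{|S|} X_{(G−S,α)} = 0`. -/
theorem k_deletion
    (α : List ℕ) (hαpos : ∀ x ∈ α, 0 < x)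
    (EG : Multiset (Sym2 (Fin α.length)))
    (k : ℕ) (hk : 0 < k) (c : Fin k → Fin α.length) (hc : Function.Injective c)
    (EC : Multiset (Sym2 (Fin α.length)))
    (hEC : EC = (Finset.univ : Finset (Fin k)).val.map
      (fun i => s(c i, c ⟨((i : ℕ) + 1) % k, Nat.mod_lt _ hk⟩)))
    (hsub : EC ≤ EG)
    (ε : Sym2 (Fin α.length)) (hε : ε ∈ EC) :
    ((EC.erase ε).powerset.map fun S =>
      ((-1 : ℚ) ^ Multiset.card S) • X (EG - S) (fun i => α.get i)).sum = 0 := by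
  classical
  set w : Fin α.length → ℕ := fun i => α.get i with hw
  set T : Multiset (Sym2 (Fin α.length)) := EC.erase ε with hT
  set f : Fin k → Sym2 (Fin α.length) :=
    fun i => s(c i, c ⟨((i : ℕ) + 1) % k, Nat.mod_lt _ hk⟩) with hf
  obtain ⟨i0, -, hi0⟩ : ∃ i0 ∈ (Finset.univ : Finset (Fin k)).val, f i0 = ε := by
    rw [hEC] at hε; exact Multiset.mem_map.mp hε
  have hmemT : ∀ i : Fin k, i ≠ i0 → f i ∈ T := by
    intro i hne
    by_cases hfe : f i = ε
    · have hcount : 2 ≤ Multiset.count ε EC := by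
        rw [hEC, Multiset.count_map]
        have hsubset : ({i0, i} : Finset (Fin k)) ⊆ Finset.univ.filter (fun a => ε = f a) := by
          intro x hx
          rcases Finset.mem_insert.mp hx with rfl | hx
          · exact Finset.mem_filter.mpr ⟨Finset.mem_univ _, hi0.symm⟩
          · rw [Finset.mem_singleton.mp hx]
            exact Finset.mem_filter.mpr ⟨Finset.mem_univ _, hfe.symm⟩
        have := Finset.card_le_card hsubset
        rw [Finset.card_insert_of_notMem (by simpa using hne.symm),
          Finset.card_singleton] at this
        exact this
      have : 0 < Multiset.count (f i) T := by
        rw [hT, hfe, Multiset.count_erase_self]; omega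
      exact Multiset.count_pos.mp this
    · exact (Multiset.mem_erase_of_ne hfe).mpr
        (by rw [hEC]; exact Multiset.mem_map_of_mem _ (Finset.mem_univ i))
  have hεmem : ∀ S : Multiset (Sym2 (Fin α.length)), S ≤ T → ε ∈ EG - S := by
    intro S hS
    rw [← Multiset.count_pos, Multiset.count_sub]
    have h1 : Multiset.count ε S ≤ Multiset.count ε T := Multiset.le_iff_count.mp hS ε
    have h2 : Multiset.count ε T = Multiset.count ε EC - 1 := by
      rw [hT, Multiset.count_erase_self]
    have h3 : Multiset.count ε EC ≤ Multiset.count ε EG := Multiset.le_iff_count.mp hsub ε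
    have h4 : 0 < Multiset.count ε EC := Multiset.count_pos.mpr hε
    omega
  funext m
  have hsum_apply : ∀ (M : Multiset (Multiset (Sym2 (Fin α.length))))
      (F : Multiset (Sym2 (Fin α.length)) → MvPowerSeries ℕ+ ℚ),
      ((M.map F).sum) m = ((M.map (fun S => F S m)).sum) := by
    intro M F
    induction M using Multiset.induction with
    | empty => rfl
    | cons a s ih => simp only [Multiset.map_cons, Multiset.sum_cons]; rw [← ih]; rfl
  show ((T.powerset.map fun S => ((-1 : ℚ) ^ Multiset.card S) • X (EG - S) w).sum) m = 0
  rw [hsum_apply]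
  have hwpos : ∀ v : Fin α.length, 0 < w v := fun v => hαpos _ (α.get_mem _)
  set K : Finset (Fin α.length → ℕ+) :=
    (Fintype.piFinset fun _ : Fin α.length => m.support).filter (fun κ => mon w κ = m) with hK
  have hsupp : ∀ κ : Fin α.length → ℕ+, mon w κ = m → ∀ v, κ v ∈ m.support := by
    intro κ h v
    rw [Finsupp.mem_support_iff, ← h]
    have : w v ≤ (mon w κ) (κ v) := by
      rw [mon, Finsupp.finset_sum_apply]
      calc w v = Finsupp.single (κ v) (w v) (κ v) := by simp
      _ ≤ _ := Finset.single_le_sum (f := fun u => (Finsupp.single (κ u) (w u)) (κ v))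
            (fun u _ => Nat.zero_le _) (Finset.mem_univ v)
    have := hwpos v; omega
  have hcard : ∀ S : Multiset (Sym2 (Fin α.length)),
      X (EG - S) w m = ∑ κ ∈ K, (if Proper (EG - S) κ then (1:ℚ) else 0) := by
    intro S
    show ((Nat.card {κ : Fin α.length → ℕ+ // Proper (EG - S) κ ∧ mon w κ = m} : ℕ) : ℚ) = _
    rw [Finset.sum_boole]
    norm_cast
    rw [← Nat.card_eq_finsetCard]
    apply Nat.card_congr
    apply Equiv.subtypeEquivRight
    intro κ
    simp only [hK, Finset.mem_filter, Fintype.mem_piFinset]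
    constructor
    · rintro ⟨hp, hm⟩; exact ⟨⟨hsupp κ hm, hm⟩, hp⟩
    · rintro ⟨⟨_, hm⟩, hp⟩; exact ⟨hp, hm⟩
  have hterm : ∀ S : Multiset (Sym2 (Fin α.length)),
      (((-1 : ℚ) ^ Multiset.card S) • X (EG - S) w) m
        = ∑ κ ∈ K, ((-1 : ℚ) ^ Multiset.card S) * (if Proper (EG - S) κ then (1:ℚ) else 0) := by
    intro S
    rw [← Finset.mul_sum, ← hcard S]
    rfl
  rw [Multiset.map_congr rfl (fun S _ => hterm S), swap_lemma]
  apply Finset.sum_eq_zero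
  intro κ _
  by_cases hgood : ∃ e ∈ T, ∃ u v : Fin α.length, e = s(u, v) ∧ κ u ≠ κ v
  · obtain ⟨e, he, u0, v0, heq, hne⟩ := hgood
    apply toggle_lemma T e he
    intro S
    have hsubS : EG - (e ::ₘ S) = (EG - S).erase e := by
      rw [← Multiset.singleton_add, tsub_add_eq_tsub_tsub_swap, Multiset.sub_singleton]
    have hiff : Proper (EG - (e ::ₘ S)) κ ↔ Proper (EG - S) κ := by
      rw [hsubS]
      constructor
      · intro hp u v huv
        by_cases hne2 : s(u, v) = e
        · rw [heq] at hne2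
          rcases Sym2.eq_iff.mp hne2 with ⟨rfl, rfl⟩ | ⟨rfl, rfl⟩
          · exact hne
          · exact hne.symm
        · exact hp u v ((Multiset.mem_erase_of_ne hne2).mpr huv)
      · intro hp u v huv
        exact hp u v (Multiset.mem_of_mem_erase huv)
    rw [Multiset.card_cons, pow_succ, if_congr hiff rfl rfl]
    ring
  · push_neg at hgood
    apply Multiset.sum_eq_zero
    intro x hx
    obtain ⟨S, hS, rfl⟩ := Multiset.mem_map.mp hx
    have hSle : S ≤ T := Multiset.mem_powerset.mp hS
    have himp : ¬ Proper (EG - S) κ := by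
      intro hp
      have hbad : ∀ i : Fin k, i ≠ i0 →
          κ (c i) = κ (c ⟨((i:ℕ)+1)%k, Nat.mod_lt _ hk⟩) := by
        intro i hne
        exact hgood (f i) (hmemT i hne) (c i) (c ⟨((i:ℕ)+1)%k, Nat.mod_lt _ hk⟩) rfl
      have hchain := chain_lemma k hk c κ i0 hbad
      have hmem : s(c i0, c ⟨((i0:ℕ)+1)%k, Nat.mod_lt _ hk⟩) ∈ EG - S := by
        rw [show s(c i0, c ⟨((i0:ℕ)+1)%k, Nat.mod_lt _ hk⟩) = ε from hi0]
        exact hεmem S hSle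
      exact hp _ _ hmem hchain
    rw [if_neg himp]
    ring

end CSF
end

section
/- Let U: Sym → Sym be the unique linear map with U(e_λ) = X_{P_λ} for every partition λ (U is a well-defined graded algebra automorphism since both {e_λ} and {X_{P_λ}} are multiplicative bases of Sym). Then U(r_α) = X_{(P_{ℓ(α)},α)} for every nonempty composition α. -/
open scoped BigOperators
open scoped Classical

namespace CSF

/-! ## Auxiliary development -/

section Aux

open Finsupp

local notation "Rg" => MvPowerSeries ℕ+ ℚ

/-- Degree of a monomial. -/
def ddeg (m : ℕ+ →₀ ℕ) : ℕ := m.sum fun _ k => k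

lemma ddeg_add (p q : ℕ+ →₀ ℕ) : ddeg (p + q) = ddeg p + ddeg q := by
  classical
  exact Finsupp.sum_add_index' (fun _ => rfl) (fun _ _ _ => rfl)

lemma ddeg_single (j : ℕ+) (a : ℕ) : ddeg (Finsupp.single j a) = a := by
  classical
  simp [ddeg, Finsupp.sum_single_index]

lemma ddeg_eq_zero_iff (m : ℕ+ →₀ ℕ) : ddeg m = 0 ↔ m = 0 := by
  classical
  constructor
  · intro h
    ext j
    simp only [Finsupp.coe_zero, Pi.zero_apply]
    by_contra hj
    have hjs : j ∈ m.support := Finsupp.mem_support_iff.2 (by simpa using hj)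
    have : m j ≤ ddeg m := Finset.single_le_sum (f := fun j => m j) (fun _ _ => Nat.zero_le _) hjs
    omega
  · rintro rfl; simp [ddeg]

lemma card_support_le_ddeg (m : ℕ+ →₀ ℕ) : m.support.card ≤ ddeg m := by
  classical
  rw [Finset.card_eq_sum_ones]
  exact Finset.sum_le_sum fun j hj => Nat.one_le_iff_ne_zero.2 (Finsupp.mem_support_iff.1 hj)

/-- Cast-to-ℚ sum of `Nat.card`s over a sigma type. -/
lemma nat_card_sigma_q {ι : Type*} (s : Finset ι) (T : ι → Type*) [∀ i : s, Finite (T i)] :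
    (Nat.card (Σ i : s, T i) : ℚ) = ∑ i : s, (Nat.card (T i) : ℚ) := by
  classical
  letI : ∀ i : s, Fintype (T i) := fun i => Fintype.ofFinite _
  rw [Nat.card_eq_fintype_card, Fintype.card_sigma]
  push_cast
  exact Finset.sum_congr rfl fun i _ => by rw [Nat.card_eq_fintype_card]

/-! ### Basic facts about `Proper` and `mon` -/

lemma proper_map {V W C : Type*} (f : V → W) (E : Multiset (Sym2 V)) (κ : W → C) :
    Proper (E.map (Sym2.map f)) κ ↔ Proper E (κ ∘ f) := by
  constructor
  · intro h u v huv
    exact h (f u) (f v) (Multiset.mem_map.2 ⟨s(u, v), huv, Sym2.map_pair_eq f u v⟩)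
  · intro h u v huv
    obtain ⟨e, he, hmap⟩ := Multiset.mem_map.1 huv
    induction e using Sym2.ind with
    | _ x y =>
      rw [Sym2.map_pair_eq] at hmap
      rcases Sym2.eq_iff.1 hmap with ⟨h1, h2⟩ | ⟨h1, h2⟩
      · rw [← h1, ← h2]; exact h x y he
      · rw [← h1, ← h2]; exact (h x y he).symm

lemma proper_add {V C : Type*} (E₁ E₂ : Multiset (Sym2 V)) (κ : V → C) :
    Proper (E₁ + E₂) κ ↔ Proper E₁ κ ∧ Proper E₂ κ := by
  constructor
  · intro h
    exact ⟨fun u v huv => h u v (Multiset.mem_add.2 (Or.inl huv)),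
      fun u v huv => h u v (Multiset.mem_add.2 (Or.inr huv))⟩
  · rintro ⟨h₁, h₂⟩ u v huv
    rcases Multiset.mem_add.1 huv with h | h
    · exact h₁ u v h
    · exact h₂ u v h

lemma mem_pathE_iff {n : ℕ} (e : Sym2 (Fin n)) :
    e ∈ pathE n ↔ ∃ a b : Fin n, ((a : ℕ) + 1 = b) ∧ e = s(a, b) := by
  constructor
  · intro he
    obtain ⟨p, hp, rfl⟩ := Multiset.mem_map.1 he
    have hp' : (p.1 : ℕ) + 1 = (p.2 : ℕ) := by
      have := Finset.mem_filter.1 (by exact hp)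
      exact this.2
    exact ⟨p.1, p.2, hp', rfl⟩
  · rintro ⟨a, b, hab, rfl⟩
    exact Multiset.mem_map.2 ⟨(a, b), by
      simp only [Finset.mem_val, Finset.mem_filter, Finset.mem_univ, true_and]; exact hab, rfl⟩

lemma proper_pathE_iff {n : ℕ} {C : Type*} (κ : Fin n → C) :
    Proper (pathE n) κ ↔ ∀ (i : ℕ) (h : i + 1 < n),
      κ ⟨i, by omega⟩ ≠ κ ⟨i + 1, h⟩ := by
  constructor
  · intro h i hi
    exact h _ _ (mem_pathE_iff _ |>.2 ⟨⟨i, by omega⟩, ⟨i + 1, hi⟩, rfl, rfl⟩)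
  · intro h u v huv
    obtain ⟨a, b, hab, he⟩ := (mem_pathE_iff _).1 huv
    have hbn := b.isLt
    have key : κ a ≠ κ b := by
      have := h (a : ℕ) (by omega)
      have ha : (⟨(a : ℕ), by omega⟩ : Fin n) = a := rfl
      have hb : (⟨(a : ℕ) + 1, by omega⟩ : Fin n) = b := Fin.ext hab
      rwa [ha, hb] at this
    rcases Sym2.eq_iff.1 he with ⟨h1, h2⟩ | ⟨h1, h2⟩
    · rw [h1, h2]; exact key
    · rw [h1, h2]; exact key.symm

lemma mon_apply_ge {V : Type*} [Fintype V] (w : V → ℕ) (κ : V → ℕ+) (v : V) :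
    w v ≤ (mon w κ) (κ v) := by
  classical
  rw [mon, Finsupp.finset_sum_apply]
  have : (Finsupp.single (κ v) (w v)) (κ v) = w v := by simp
  calc w v = (Finsupp.single (κ v) (w v)) (κ v) := this.symm
    _ ≤ ∑ u : V, (Finsupp.single (κ u) (w u)) (κ v) :=
        Finset.single_le_sum (f := fun u => (Finsupp.single (κ u) (w u)) (κ v))
          (fun _ _ => Nat.zero_le _) (Finset.mem_univ v)

lemma kappa_mem_support {V : Type*} [Fintype V] {w : V → ℕ} (hw : ∀ v, 0 < w v)
    {κ : V → ℕ+} {m : ℕ+ →₀ ℕ} (h : mon w κ = m) (v : V) : κ v ∈ m.support := by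
  rw [Finsupp.mem_support_iff]
  have := mon_apply_ge w κ v
  rw [h] at this
  have := hw v
  omega

lemma finite_colorings {V : Type*} [Fintype V] (E : Multiset (Sym2 V)) {w : V → ℕ}
    (hw : ∀ v, 0 < w v) (m : ℕ+ →₀ ℕ) :
    Finite {κ : V → ℕ+ // Proper E κ ∧ mon w κ = m} := by
  classical
  apply Finite.of_injective (fun κ => (fun v => (⟨κ.1 v, kappa_mem_support hw κ.2.2 v⟩ :
    {j : ℕ+ // j ∈ m.support})))
  intro κ κ' h
  apply Subtype.ext; funext v
  exact congrArg Subtype.val (congrFun h v)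

lemma finite_pair_colorings {V : Type*} [Fintype V] (E : Multiset (Sym2 V)) {a : ℕ}
    (ha : 0 < a) {w : V → ℕ} (hw : ∀ v, 0 < w v) (m : ℕ+ →₀ ℕ) :
    Finite {p : ℕ+ × (V → ℕ+) // Proper E p.2 ∧ Finsupp.single p.1 a + mon w p.2 = m} := by
  classical
  have key : ∀ p : {p : ℕ+ × (V → ℕ+) //
      Proper E p.2 ∧ Finsupp.single p.1 a + mon w p.2 = m},
      p.1.1 ∈ m.support ∧ ∀ v, p.1.2 v ∈ m.support := by
    rintro ⟨⟨j, κ⟩, hp, hm⟩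
    dsimp only
    constructor
    · rw [Finsupp.mem_support_iff]
      have : m j = a + (mon w κ) j := by rw [← hm]; simp
      omega
    · intro v
      rw [Finsupp.mem_support_iff]
      have h1 := mon_apply_ge w κ v
      have : m (κ v) = (Finsupp.single j a) (κ v) + (mon w κ) (κ v) := by rw [← hm]; simp
      have := hw v
      omega
  apply Finite.of_injective (fun p => ((⟨p.1.1, (key p).1⟩ : {j : ℕ+ // j ∈ m.support}),
    (fun v => (⟨p.1.2 v, (key p).2 v⟩ : {j : ℕ+ // j ∈ m.support}))))
  rintro ⟨⟨j, κ⟩, hp⟩ ⟨⟨j', κ'⟩, hq⟩ h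
  simp only [Prod.mk.injEq, Subtype.mk.injEq] at h
  apply Subtype.ext
  simp only [Prod.mk.injEq]
  exact ⟨h.1, funext fun v => congrArg Subtype.val (congrFun h.2 v)⟩

/-! ### `pS` as a count -/

lemma pS_card (a : ℕ) (ha : 0 < a) (m : ℕ+ →₀ ℕ) :
    pS a m = (Nat.card {j : ℕ+ // Finsupp.single j a = m} : ℚ) := by
  classical
  by_cases h : ∃ j : ℕ+, m = Finsupp.single j a
  · obtain ⟨j, rfl⟩ := h
    have : Unique {j' : ℕ+ // Finsupp.single j' a = Finsupp.single j a} := by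
      refine ⟨⟨⟨j, rfl⟩⟩, ?_⟩
      rintro ⟨j', hj'⟩
      ext
      exact Finsupp.single_left_injective (Nat.pos_iff_ne_zero.1 ha) hj'
    rw [Nat.card_unique]
    simp only [pS, Nat.cast_one]
    rw [if_pos ⟨j, rfl⟩]
  · have : IsEmpty {j : ℕ+ // Finsupp.single j a = m} := by
      refine ⟨fun j => h ⟨j.1, j.2.symm⟩⟩
    rw [Nat.card_of_isEmpty]
    simp only [pS]
    rw [if_neg h]
    simp

end Aux

/-! ### Counting lemmas for products of chromatic functions -/

lemma nat_card_fiber_sum {α β : Type*} (s : Finset β) (f : α → β) (hf : ∀ x, f x ∈ s)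
    [Finite α] :
    (Nat.card α : ℚ) = ∑ p ∈ s, (Nat.card {x : α // f x = p} : ℚ) := by
  classical
  rw [← Finset.sum_coe_sort]
  rw [← nat_card_sigma_q s (fun p => {x : α // f x = p})]
  exact (congrArg _ (Nat.card_congr (Equiv.sigmaSubtypeFiberEquiv f (· ∈ s) hf))).symm

lemma mon_comp_equiv {V V' : Type*} [Fintype V] [Fintype V'] (e : V ≃ V')
    (w : V → ℕ) (κ : V → ℕ+) :
    mon (w ∘ e.symm) (κ ∘ e.symm) = mon w κ := by
  rw [mon, mon]
  exact Fintype.sum_equiv e.symm _ _ (fun v' => rfl)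

lemma X_relabel {V V' : Type*} [Fintype V] [Fintype V'] (e : V ≃ V')
    (E : Multiset (Sym2 V)) (w : V → ℕ) :
    X (E.map (Sym2.map e)) (w ∘ e.symm) = X E w := by
  funext m
  simp only [X]
  congr 1
  apply Nat.card_congr
  apply Equiv.subtypeEquiv (Equiv.arrowCongr (e.symm : V' ≃ V) (Equiv.refl ℕ+))
  intro κ'
  have h1 : (Equiv.arrowCongr (e.symm : V' ≃ V) (Equiv.refl ℕ+)) κ' = κ' ∘ e := by
    funext v; simp [Equiv.arrowCongr]
  rw [h1, proper_map]
  have h2 : mon (w ∘ e.symm) κ' = mon w (κ' ∘ e) := by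
    have h0 := mon_comp_equiv e w (κ' ∘ e)
    have h3 : (κ' ∘ e) ∘ e.symm = κ' := by funext v'; simp
    rwa [h3] at h0
  rw [h2]

lemma mon_sum_elim {V₁ V₂ : Type*} [Fintype V₁] [Fintype V₂] (w₁ : V₁ → ℕ) (w₂ : V₂ → ℕ)
    (κ : V₁ ⊕ V₂ → ℕ+) :
    mon (Sum.elim w₁ w₂) κ = mon w₁ (κ ∘ Sum.inl) + mon w₂ (κ ∘ Sum.inr) := by
  rw [mon, mon, mon, Fintype.sum_sum_type]
  rfl

lemma sum_elim_pos {V₁ V₂ : Type*} {w₁ : V₁ → ℕ} {w₂ : V₂ → ℕ}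
    (h₁ : ∀ v, 0 < w₁ v) (h₂ : ∀ v, 0 < w₂ v) : ∀ v, 0 < Sum.elim w₁ w₂ v := by
  rintro (v | v)
  · exact h₁ v
  · exact h₂ v

lemma coeff_mul_apply (f g : MvPowerSeries ℕ+ ℚ) (m : ℕ+ →₀ ℕ) :
    (f * g) m = ∑ p ∈ Finset.HasAntidiagonal.antidiagonal m, f p.1 * g p.2 := by
  rw [← MvPowerSeries.coeff_apply (f * g) m, MvPowerSeries.coeff_mul]
  rfl

lemma one_apply (m : ℕ+ →₀ ℕ) : (1 : MvPowerSeries ℕ+ ℚ) m = if m = 0 then 1 else 0 := by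
  rw [← MvPowerSeries.coeff_apply 1 m, MvPowerSeries.coeff_one]

lemma X_mul_X {V₁ V₂ : Type*} [Fintype V₁] [Fintype V₂]
    (E₁ : Multiset (Sym2 V₁)) (E₂ : Multiset (Sym2 V₂)) {w₁ : V₁ → ℕ} {w₂ : V₂ → ℕ}
    (h₁ : ∀ v, 0 < w₁ v) (h₂ : ∀ v, 0 < w₂ v) :
    X (E₁.map (Sym2.map Sum.inl) + E₂.map (Sym2.map Sum.inr)) (Sum.elim w₁ w₂)
      = X E₁ w₁ * X E₂ w₂ := by
  classical
  funext m
  set E := E₁.map (Sym2.map Sum.inl) + E₂.map (Sym2.map Sum.inr) with hE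
  haveI hfin : Finite {κ : V₁ ⊕ V₂ → ℕ+ // Proper E κ ∧ mon (Sum.elim w₁ w₂) κ = m} :=
    finite_colorings E (sum_elim_pos h₁ h₂) m
  have hsplit : ∀ κ : V₁ ⊕ V₂ → ℕ+,
      Proper E κ ↔ Proper E₁ (κ ∘ Sum.inl) ∧ Proper E₂ (κ ∘ Sum.inr) := fun κ => by
    rw [hE, proper_add, proper_map, proper_map]
  rw [coeff_mul_apply]
  have hmem : ∀ x : {κ : V₁ ⊕ V₂ → ℕ+ // Proper E κ ∧ mon (Sum.elim w₁ w₂) κ = m},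
      (mon w₁ (x.1 ∘ Sum.inl), mon w₂ (x.1 ∘ Sum.inr)) ∈ Finset.HasAntidiagonal.antidiagonal m := by
    intro x
    rw [Finset.HasAntidiagonal.mem_antidiagonal, ← mon_sum_elim]
    exact x.2.2
  simp only [X]
  rw [nat_card_fiber_sum (Finset.HasAntidiagonal.antidiagonal m) _ hmem]
  refine Finset.sum_congr rfl ?_
  rintro ⟨p₁, p₂⟩ hp
  rw [Finset.HasAntidiagonal.mem_antidiagonal] at hp
  have e : {x : {κ : V₁ ⊕ V₂ → ℕ+ // Proper E κ ∧ mon (Sum.elim w₁ w₂) κ = m} //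
        (mon w₁ (x.1 ∘ Sum.inl), mon w₂ (x.1 ∘ Sum.inr)) = (p₁, p₂)} ≃
      {κ₁ : V₁ → ℕ+ // Proper E₁ κ₁ ∧ mon w₁ κ₁ = p₁} ×
      {κ₂ : V₂ → ℕ+ // Proper E₂ κ₂ ∧ mon w₂ κ₂ = p₂} := by
    refine ⟨fun x => (⟨x.1.1 ∘ Sum.inl, ((hsplit x.1.1).1 x.1.2.1).1,
        congrArg Prod.fst x.2⟩, ⟨x.1.1 ∘ Sum.inr, ((hsplit x.1.1).1 x.1.2.1).2,
        congrArg Prod.snd x.2⟩),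
      fun y => ⟨⟨Sum.elim y.1.1 y.2.1, ?_, ?_⟩, ?_⟩, ?_, ?_⟩
    · rw [hsplit]
      exact ⟨by simpa using y.1.2.1, by simpa using y.2.2.1⟩
    · rw [mon_sum_elim]
      have e1 : Sum.elim y.1.1 y.2.1 ∘ Sum.inl = y.1.1 := rfl
      have e2 : Sum.elim y.1.1 y.2.1 ∘ Sum.inr = y.2.1 := rfl
      rw [e1, e2, y.1.2.2, y.2.2.2, hp]
    · have e1 : Sum.elim y.1.1 y.2.1 ∘ Sum.inl = y.1.1 := rfl
      have e2 : Sum.elim y.1.1 y.2.1 ∘ Sum.inr = y.2.1 := rfl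
      simp only [e1, e2, y.1.2.2, y.2.2.2]
    · intro x
      apply Subtype.ext
      apply Subtype.ext
      funext v
      cases v <;> rfl
    · intro y
      apply Prod.ext
      · apply Subtype.ext; rfl
      · apply Subtype.ext; rfl
  rw [Nat.card_congr e, Nat.card_prod]
  push_cast
  rfl

/-! ### One-vertex graphs and `pS` -/

lemma pathE_one : pathE 1 = 0 := by
  apply Multiset.eq_zero_of_forall_notMem
  intro e he
  obtain ⟨p, hp, _⟩ := Multiset.mem_map.1 he
  have := (Finset.mem_filter.1 (Finset.mem_def.2 hp)).2
  have h1 : (p.1 : ℕ) < 1 := p.1.isLt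
  have h2 : (p.2 : ℕ) < 1 := p.2.isLt
  omega

lemma X_onevertex (w : Fin 1 → ℕ) (hw : 0 < w 0) :
    X (0 : Multiset (Sym2 (Fin 1))) w = pS (w 0) := by
  funext m
  rw [X, pS_card (w 0) hw m]
  congr 1
  apply Nat.card_congr
  refine ⟨fun κ => ⟨κ.1 0, ?_⟩, fun j => ⟨fun _ => j.1, fun u v h => absurd h (by simp), ?_⟩,
    ?_, ?_⟩
  · have := κ.2.2
    rw [mon] at this
    exact (Fin.sum_univ_one fun v => Finsupp.single (κ.1 v) (w v)).symm.trans this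
  · rw [mon, Fin.sum_univ_one]
    exact j.2
  · intro κ
    apply Subtype.ext
    funext v
    have : v = 0 := Subsingleton.elim v 0
    rw [this]
  · intro j
    rfl

lemma X_pathE_one (w : Fin 1 → ℕ) (hw : 0 < w 0) : X (pathE 1) w = pS (w 0) := by
  rw [pathE_one, X_onevertex w hw]

lemma X_empty {V : Type*} [Fintype V] [IsEmpty V] (E : Multiset (Sym2 V)) (w : V → ℕ) :
    X E w = 1 := by
  funext m
  rw [X, one_apply]
  have hmon : ∀ κ : V → ℕ+, mon w κ = 0 := by
    intro κ
    rw [mon, Finset.univ_eq_empty, Finset.sum_empty]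
  by_cases hm : m = 0
  · subst hm
    haveI : Nonempty {κ : V → ℕ+ // Proper E κ ∧ mon w κ = 0} :=
      ⟨⟨fun v => isEmptyElim v, fun u v _ => isEmptyElim u, hmon _⟩⟩
    haveI : Subsingleton {κ : V → ℕ+ // Proper E κ ∧ mon w κ = 0} :=
      ⟨fun κ κ' => Subtype.ext (funext fun v => isEmptyElim v)⟩
    rw [Nat.card_unique, if_pos rfl]
    norm_num
  · haveI : IsEmpty {κ : V → ℕ+ // Proper E κ ∧ mon w κ = m} :=
      ⟨fun κ => hm (κ.2.2.symm.trans (hmon κ.1) ▸ rfl)⟩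
    rw [Nat.card_of_isEmpty, if_neg hm]
    norm_num

lemma pS_mul_X {V : Type*} [Fintype V] (a : ℕ) (ha : 0 < a) (E : Multiset (Sym2 V))
    {w : V → ℕ} (hw : ∀ v, 0 < w v) (m : ℕ+ →₀ ℕ) :
    (pS a * X E w) m =
      (Nat.card {p : ℕ+ × (V → ℕ+) //
        Proper E p.2 ∧ Finsupp.single p.1 a + mon w p.2 = m} : ℚ) := by
  classical
  haveI hfin := finite_pair_colorings E ha hw m
  rw [coeff_mul_apply]
  have hmem : ∀ x : {p : ℕ+ × (V → ℕ+) //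
      Proper E p.2 ∧ Finsupp.single p.1 a + mon w p.2 = m},
      (Finsupp.single x.1.1 a, mon w x.1.2) ∈ Finset.HasAntidiagonal.antidiagonal m := by
    intro x
    rw [Finset.HasAntidiagonal.mem_antidiagonal]
    exact x.2.2
  rw [nat_card_fiber_sum (Finset.HasAntidiagonal.antidiagonal m) _ hmem]
  refine Finset.sum_congr rfl ?_
  rintro ⟨p₁, p₂⟩ hp
  rw [Finset.HasAntidiagonal.mem_antidiagonal] at hp
  have e : {x : {p : ℕ+ × (V → ℕ+) //
        Proper E p.2 ∧ Finsupp.single p.1 a + mon w p.2 = m} //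
        (Finsupp.single x.1.1 a, mon w x.1.2) = (p₁, p₂)} ≃
      {j : ℕ+ // Finsupp.single j a = p₁} ×
      {κ : V → ℕ+ // Proper E κ ∧ mon w κ = p₂} := by
    refine ⟨fun x => (⟨x.1.1.1, congrArg Prod.fst x.2⟩,
        ⟨x.1.1.2, x.1.2.1, congrArg Prod.snd x.2⟩),
      fun y => ⟨⟨(y.1.1, y.2.1), y.2.2.1, by rw [y.1.2, y.2.2.2, hp]⟩, ?_⟩, ?_, ?_⟩
    · simp only [y.1.2, y.2.2.2]
    · intro x
      apply Subtype.ext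
      apply Subtype.ext
      rfl
    · intro y
      apply Prod.ext
      · apply Subtype.ext; rfl
      · apply Subtype.ext; rfl
  rw [Nat.card_congr e, Nat.card_prod]
  push_cast
  rw [pS_card a ha p₁]
  rfl

/-! ### Deletion–contraction for weighted paths -/

lemma mon_fin_cases {n : ℕ} (w : Fin (n+1) → ℕ) (j : ℕ+) (κ : Fin n → ℕ+) :
    mon w (Fin.cases j κ) = Finsupp.single j (w 0) + mon (fun i => w i.succ) κ := by
  rw [mon, mon, Fin.sum_univ_succ]
  simp

lemma mon_contract {n : ℕ} (hn : 0 < n) (w : Fin (n+1) → ℕ) (κ : Fin n → ℕ+) :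
    mon (fun i : Fin n => w i.succ + if (i : ℕ) = 0 then w 0 else 0) κ
      = Finsupp.single (κ ⟨0, hn⟩) (w 0) + mon (fun i => w i.succ) κ := by
  rw [mon, mon]
  have hsp : ∀ i : Fin n, (Finsupp.single (κ i) (w i.succ + if (i : ℕ) = 0 then w 0 else 0))
      = Finsupp.single (κ i) (w i.succ)
        + Finsupp.single (κ i) (if (i : ℕ) = 0 then w 0 else 0) :=
    fun i => Finsupp.single_add _ _ _
  rw [Finset.sum_congr rfl (fun i _ => hsp i), Finset.sum_add_distrib]
  have h2 : (∑ i : Fin n, Finsupp.single (κ i) (if (i : ℕ) = 0 then w 0 else 0))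
      = Finsupp.single (κ ⟨0, hn⟩) (w 0) := by
    rw [Finset.sum_eq_single (⟨0, hn⟩ : Fin n)]
    · simp
    · intro i _ hne
      have hi0 : (i : ℕ) ≠ 0 := fun h => hne (Fin.ext h)
      rw [if_neg hi0, Finsupp.single_zero]
    · intro h; exact absurd (Finset.mem_univ _) h
  rw [h2]
  exact add_comm _ _

lemma fin_cases_eval_zero {n : ℕ} (j : ℕ+) (κ : Fin n → ℕ+) (h : 0 < n + 1) :
    Fin.cases (motive := fun _ => ℕ+) j κ ⟨0, h⟩ = j := by
  have : (⟨0, h⟩ : Fin (n+1)) = 0 := Fin.ext (by simp)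
  rw [this, Fin.cases_zero]

lemma fin_cases_eval_succ {n : ℕ} (j : ℕ+) (κ : Fin n → ℕ+) (i : ℕ) (h : i + 1 < n + 1) :
    Fin.cases (motive := fun _ => ℕ+) j κ ⟨i + 1, h⟩ = κ ⟨i, by omega⟩ := by
  have : (⟨i + 1, h⟩ : Fin (n+1)) = Fin.succ ⟨i, by omega⟩ := rfl
  rw [this, Fin.cases_succ]

lemma proper_cases_iff {n : ℕ} (hn : 0 < n) (j : ℕ+) (κ : Fin n → ℕ+) :
    Proper (pathE (n+1)) (Fin.cases j κ) ↔ j ≠ κ ⟨0, hn⟩ ∧ Proper (pathE n) κ := by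
  rw [proper_pathE_iff, proper_pathE_iff]
  constructor
  · intro h
    constructor
    · have h0 := h 0 (by omega)
      rwa [fin_cases_eval_zero, fin_cases_eval_succ] at h0
    · intro i hi
      have hi1 := h (i + 1) (by omega)
      rwa [fin_cases_eval_succ, fin_cases_eval_succ] at hi1
  · rintro ⟨h0, h⟩ i hi
    match i with
    | 0 =>
      rw [fin_cases_eval_zero, fin_cases_eval_succ]
      exact h0
    | (i + 1) =>
      rw [fin_cases_eval_succ, fin_cases_eval_succ]
      exact h i (by omega)

lemma proper_tail {n : ℕ} (κ : Fin (n+1) → ℕ+) (h : Proper (pathE (n+1)) κ) :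
    Proper (pathE n) (fun i => κ i.succ) := by
  rw [proper_pathE_iff] at h ⊢
  intro i hi
  have := h (i + 1) (by omega)
  exact this

lemma fin_cases_eta {n : ℕ} (κ : Fin (n+1) → ℕ+) :
    Fin.cases (motive := fun _ => ℕ+) (κ 0) (fun i => κ i.succ) = κ := by
  funext v
  induction v using Fin.cases with
  | zero => rw [Fin.cases_zero]
  | succ i => rw [Fin.cases_succ]

lemma deletion_contraction {n : ℕ} (hn : 0 < n) (w : Fin (n+1) → ℕ) (hw : ∀ i, 0 < w i) :
    pS (w 0) * X (pathE n) (fun i => w i.succ)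
      = X (pathE (n+1)) w
        + X (pathE n) (fun i : Fin n => w i.succ + if (i : ℕ) = 0 then w 0 else 0) := by
  classical
  funext m
  rw [pS_mul_X (w 0) (hw 0) (pathE n) (w := fun i : Fin n => w i.succ) (fun i => hw i.succ) m]
  have hstep : (X (pathE (n+1)) w
      + X (pathE n) (fun i : Fin n => w i.succ + if (i : ℕ) = 0 then w 0 else 0)) m
      = X (pathE (n+1)) w m
        + X (pathE n) (fun i : Fin n => w i.succ + if (i : ℕ) = 0 then w 0 else 0) m := rfl
  rw [hstep]
  simp only [X]
  haveI hA : Finite {κ : Fin (n+1) → ℕ+ // Proper (pathE (n+1)) κ ∧ mon w κ = m} :=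
    finite_colorings _ hw m
  haveI hB : Finite {κ : Fin n → ℕ+ // Proper (pathE n) κ ∧
      mon (fun i : Fin n => w i.succ + if (i : ℕ) = 0 then w 0 else 0) κ = m} :=
    finite_colorings _ (fun i : Fin n => Nat.lt_of_lt_of_le (hw i.succ) (Nat.le_add_right _ _)) m
  rw [← Nat.cast_add, ← Nat.card_sum]
  congr 1
  apply Nat.card_congr
  refine ⟨fun x => if h : x.1.1 = x.1.2 ⟨0, hn⟩ then
      Sum.inr ⟨x.1.2, x.2.1, by
        rw [mon_contract hn w x.1.2, ← h]
        exact x.2.2⟩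
    else
      Sum.inl ⟨Fin.cases x.1.1 x.1.2, (proper_cases_iff hn _ _).2 ⟨h, x.2.1⟩, by
        rw [mon_fin_cases]
        exact x.2.2⟩,
    fun y => Sum.elim
      (fun κ => ⟨(κ.1 0, fun i => κ.1 i.succ), proper_tail κ.1 κ.2.1, by
        rw [← mon_fin_cases, fin_cases_eta]
        exact κ.2.2⟩)
      (fun κ => ⟨(κ.1 ⟨0, hn⟩, κ.1), κ.2.1, by
        rw [← mon_contract hn w κ.1]
        exact κ.2.2⟩) y,
    ?_, ?_⟩
  · rintro ⟨⟨j, κ⟩, hp, hm⟩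
    dsimp only
    by_cases h : j = κ ⟨0, hn⟩
    · rw [dif_pos h]
      apply Subtype.ext
      dsimp only [Sum.elim_inr]
      exact Prod.ext h.symm rfl
    · rw [dif_neg h]
      apply Subtype.ext
      dsimp only [Sum.elim_inl]
      refine Prod.ext ?_ ?_
      · exact fin_cases_eval_zero j κ (by omega) ▸ rfl
      · funext i
        dsimp only
        rw [Fin.cases_succ]
  · rintro (κ | κ)
    · dsimp only [Sum.elim_inl]
      have hne : κ.1 0 ≠ κ.1 (Fin.succ ⟨0, hn⟩) := by
        have h01 := (proper_pathE_iff κ.1).1 κ.2.1 0 (by omega)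
        have e0 : (⟨0, by omega⟩ : Fin (n+1)) = 0 := Fin.ext (by simp)
        have e1 : (⟨0 + 1, by omega⟩ : Fin (n+1)) = Fin.succ ⟨0, hn⟩ := rfl
        rw [e0, e1] at h01
        exact h01
      rw [dif_neg hne]
      congr 1
      apply Subtype.ext
      exact fin_cases_eta κ.1
    · dsimp only [Sum.elim_inr]
      rw [dif_pos rfl]

/-! ### Coarsenings: basic facts -/

lemma pProd_cons (a : ℕ) (l : List ℕ) : pProd (a :: l) = pS a * pProd l := by
  rw [pProd, pProd, List.map_cons, List.prod_cons]

lemma coars_len : ∀ (l : List ℕ) (β : List ℕ), β ∈ coarsenings l → β.length ≤ l.length := by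
  intro l
  induction l with
  | nil => intro β h; simp [coarsenings] at h; simp [h]
  | cons a l ih =>
    intro β h
    rw [coarsenings, List.mem_append] at h
    rcases h with h | h
    · obtain ⟨γ, hγ, rfl⟩ := List.mem_map.1 h
      have := ih γ hγ
      simp only [List.length_cons]
      omega
    · obtain ⟨γ, hγ, heq⟩ := List.mem_filterMap.1 h
      cases γ with
      | nil => simp at heq
      | cons b γ' =>
        simp only [Option.some.injEq] at heq
        subst heq
        have := ih (b :: γ') hγ
        simp only [List.length_cons] at this ⊢
        omega

lemma coars_ne_nil {a : ℕ} {l : List ℕ} {β : List ℕ} (h : β ∈ coarsenings (a :: l)) :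
    β ≠ [] := by
  rw [coarsenings, List.mem_append] at h
  rcases h with h | h
  · obtain ⟨γ, _, rfl⟩ := List.mem_map.1 h
    simp
  · obtain ⟨γ, _, heq⟩ := List.mem_filterMap.1 h
    cases γ with
    | nil => simp at heq
    | cons b γ' =>
      simp only [Option.some.injEq] at heq
      subst heq
      simp

lemma coars_pos : ∀ (l : List ℕ), (∀ x ∈ l, 0 < x) → ∀ β ∈ coarsenings l, ∀ x ∈ β, 0 < x := by
  intro l
  induction l with
  | nil =>
    intro _ β h
    simp [coarsenings] at h
    simp [h]
  | cons a l ih =>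
    intro hl β h
    rw [coarsenings, List.mem_append] at h
    rcases h with h | h
    · obtain ⟨γ, hγ, rfl⟩ := List.mem_map.1 h
      intro x hx
      rcases List.mem_cons.1 hx with rfl | hx
      · exact hl x (List.mem_cons_self)
      · exact ih (fun y hy => hl y (List.mem_cons_of_mem _ hy)) γ hγ x hx
    · obtain ⟨γ, hγ, heq⟩ := List.mem_filterMap.1 h
      cases γ with
      | nil => simp at heq
      | cons b γ' =>
        simp only [Option.some.injEq] at heq
        subst heq
        intro x hx
        rcases List.mem_cons.1 hx with rfl | hx
        · have := hl a (List.mem_cons_self)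
          omega
        · exact ih (fun y hy => hl y (List.mem_cons_of_mem _ hy)) (b :: γ')
            hγ x (List.mem_cons_of_mem _ hx)

lemma filterMap_merge (a : ℕ) (L : List (List ℕ)) (hL : ∀ β ∈ L, β ≠ []) :
    L.filterMap (fun β => match β with
      | [] => none
      | b :: β' => some ((a + b) :: β'))
      = L.map (fun β => (a + β.head!) :: β.tail) := by
  induction L with
  | nil => rfl
  | cons β L ih =>
    cases β with
    | nil => exact absurd rfl (hL [] (List.mem_cons_self))
    | cons b β' =>
      rw [List.filterMap_cons, List.map_cons,
        ih (fun γ hγ => hL γ (List.mem_cons_of_mem _ hγ))]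
      rfl

lemma coarsenings_merge (a b : ℕ) (α : List ℕ) :
    (coarsenings (b :: α)).map (fun β => (a + β.head!) :: β.tail)
      = coarsenings ((a + b) :: α) := by
  rw [coarsenings, coarsenings, List.map_append, List.map_map, List.map_filterMap]
  congr 1
  apply List.filterMap_congr
  intro γ _
  cases γ with
  | nil => rfl
  | cons c γ' =>
    simp [Nat.add_assoc]

lemma list_sum_map_neg {ι M : Type*} [AddCommGroup M] (l : List ι) (f : ι → M) :
    (l.map (fun x => -f x)).sum = -(l.map f).sum := by
  induction l with
  | nil => simp
  | cons a l ih =>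
    rw [List.map_cons, List.sum_cons, List.map_cons, List.sum_cons, ih, neg_add]

/-! ### Whitney expansion for weighted paths -/

lemma X_path_whitney : ∀ (n : ℕ) (w : Fin n → ℕ), 0 < n → (∀ i, 0 < w i) →
    X (pathE n) w = ((coarsenings (List.ofFn w)).map
      (fun β => ((-1 : ℚ)) ^ (n - β.length) • pProd β)).sum := by
  intro n
  induction n with
  | zero => intro w h; omega
  | succ k ih =>
    rcases Nat.eq_zero_or_pos k with rfl | hkpos
    · intro w _ hw
      have hofn : List.ofFn w = [w 0] := by
        rw [List.ofFn_succ]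
        congr 1
      rw [hofn, X_pathE_one w (hw 0)]
      simp [coarsenings, pProd_cons, pProd]
    · obtain ⟨k', rfl⟩ : ∃ k', k = k' + 1 := ⟨k - 1, by omega⟩
      intro w _ hw
      -- deletion-contraction
      have hdc := deletion_contraction hkpos w hw
      set wt : Fin (k' + 1) → ℕ := fun i => w i.succ with hwt
      set wc : Fin (k' + 1) → ℕ := fun i : Fin (k' + 1) => w i.succ + if (i : ℕ) = 0 then w 0 else 0 with hwc
      have hXp : X (pathE (k' + 1 + 1)) w = pS (w 0) * X (pathE (k' + 1)) wt - X (pathE (k' + 1)) wc :=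
        eq_sub_of_add_eq hdc.symm
      have hwtpos : ∀ i, 0 < wt i := fun i => hw i.succ
      have hwcpos : ∀ i, 0 < wc i := fun i => Nat.lt_of_lt_of_le (hw i.succ) (Nat.le_add_right _ _)
      have hXt := ih wt hkpos hwtpos
      have hXc := ih wc hkpos hwcpos
      -- list structure
      have hofn : List.ofFn w = w 0 :: List.ofFn wt := List.ofFn_succ (f := w)
      set l' : List ℕ := List.ofFn wt with hl'
      have hl'len : l'.length = k' + 1 := List.length_ofFn (f := wt)
      have hl'ne : l' ≠ [] := List.ne_nil_of_length_pos (by omega)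
      have hl'cons : l' = wt 0 :: List.ofFn (fun i : Fin k' => wt i.succ) := List.ofFn_succ (f := wt)
      have hcoars : coarsenings (List.ofFn w)
          = (coarsenings l').map (fun β => w 0 :: β)
            ++ (coarsenings l').filterMap (fun β => match β with
              | [] => none
              | b :: β' => some ((w 0 + b) :: β')) := by
        rw [hofn]; rfl
      have hne : ∀ β ∈ coarsenings l', β ≠ [] := by
        intro β hβ
        obtain ⟨b, t, hbt⟩ := List.exists_cons_of_ne_nil hl'ne
        rw [hbt] at hβ
        exact coars_ne_nil hβ
      rw [hcoars, List.map_append, List.sum_append]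
      -- part 1
      have hpart1 : (((coarsenings l').map (fun β => w 0 :: β)).map
          (fun β => ((-1 : ℚ)) ^ (k' + 1 + 1 - β.length) • pProd β)).sum
          = pS (w 0) * X (pathE (k' + 1)) wt := by
        rw [List.map_map]
        have : ((coarsenings l').map ((fun β => ((-1 : ℚ)) ^ (k' + 1 + 1 - β.length) • pProd β)
            ∘ (fun β => w 0 :: β)))
            = (coarsenings l').map (fun β => pS (w 0) *
                (((-1 : ℚ)) ^ (k' + 1 - β.length) • pProd β)) := by
          apply List.map_congr_left
          intro β _
          simp only [Function.comp_apply, List.length_cons, pProd_cons,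
            Nat.succ_sub_succ_eq_sub]
          rw [mul_smul_comm]
        rw [this, List.sum_map_mul_left, ← hXt]
      -- part 2
      have hpart2 : (((coarsenings l').filterMap (fun β => match β with
            | [] => none
            | b :: β' => some ((w 0 + b) :: β'))).map
          (fun β => ((-1 : ℚ)) ^ (k' + 1 + 1 - β.length) • pProd β)).sum
          = -X (pathE (k' + 1)) wc := by
        rw [filterMap_merge (w 0) _ hne, List.map_map]
        have hmapeq : ((coarsenings l').map ((fun β => ((-1 : ℚ)) ^ (k' + 1 + 1 - β.length) • pProd β)
            ∘ (fun β => (w 0 + β.head!) :: β.tail)))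
            = ((coarsenings l').map ((fun β => ((-1 : ℚ)) ^ (k' + 1 + 1 - β.length) • pProd β)
            ∘ (fun β => (w 0 + β.head!) :: β.tail))) := rfl
        -- transport length through merge
        have hlen : ∀ β ∈ coarsenings l',
            ((fun β => ((-1 : ℚ)) ^ (k' + 1 + 1 - β.length) • pProd β) ∘
              (fun β => (w 0 + β.head!) :: β.tail)) β
            = (fun γ => ((-1 : ℚ)) ^ (k' + 1 + 1 - γ.length) • pProd γ)
                ((fun β => (w 0 + β.head!) :: β.tail) β) := fun β _ => rfl
        have : ((coarsenings l').map (fun β => (w 0 + β.head!) :: β.tail)).map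
              (fun γ => ((-1 : ℚ)) ^ (k' + 1 + 1 - γ.length) • pProd γ)
            = (coarsenings l').map ((fun γ => ((-1 : ℚ)) ^ (k' + 1 + 1 - γ.length) • pProd γ)
            ∘ (fun β => (w 0 + β.head!) :: β.tail)) := List.map_map
        rw [← this]
        rw [hl'cons, coarsenings_merge]
        -- identify with coarsenings (ofFn wc)
        have hofnc : List.ofFn wc = (w 0 + wt 0) :: List.ofFn (fun i : Fin k' => wt i.succ) := by
          rw [List.ofFn_succ]
          congr 1
          · show wt 0 + (if ((0 : Fin (k' + 1)) : ℕ) = 0 then w 0 else 0) = w 0 + wt 0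
            simp [Nat.add_comm]
        rw [← hofnc]
        -- now flip the sign
        have hlen2 : ∀ γ ∈ coarsenings (List.ofFn wc),
            ((-1 : ℚ)) ^ (k' + 1 + 1 - γ.length) • pProd γ
            = -(((-1 : ℚ)) ^ (k' + 1 - γ.length) • pProd γ) := by
          intro γ hγ
          have hle : γ.length ≤ k' + 1 := by
            have := coars_len (List.ofFn wc) γ hγ
            rwa [List.length_ofFn] at this
          have : k' + 1 + 1 - γ.length = (k' + 1 - γ.length) + 1 := by omega
          rw [this, pow_succ, mul_neg_one, neg_smul]
        rw [List.map_congr_left hlen2, list_sum_map_neg, ← hXc]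
      rw [hpart1, hpart2, hXp, sub_eq_add_neg]

/-! ### Compositions: equations, basic facts, peeling, and the bridge -/

lemma comps_zero : comps 0 = [[]] := by rw [comps]

lemma comps_succ (n : ℕ) : comps (n+1) = (List.range (n + 1)).attach.flatMap fun j =>
    (comps j.1).map (fun c => (n + 1 - j.1) :: c) := by rw [comps]

lemma mem_comps_succ {n : ℕ} {γ : List ℕ} :
    γ ∈ comps (n+1) ↔ ∃ j < n + 1, ∃ c ∈ comps j, γ = (n + 1 - j) :: c := by
  rw [comps_succ, List.mem_flatMap]
  constructor
  · rintro ⟨j, hj, hmem⟩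
    obtain ⟨c, hc, rfl⟩ := List.mem_map.1 hmem
    exact ⟨j.1, List.mem_range.1 j.2, c, hc, rfl⟩
  · rintro ⟨j, hj, c, hc, rfl⟩
    exact ⟨⟨j, List.mem_range.2 hj⟩, List.mem_attach _ _, List.mem_map.2 ⟨c, hc, rfl⟩⟩

lemma comps_pos : ∀ n, ∀ γ ∈ comps n, ∀ x ∈ γ, 0 < x := by
  intro n
  induction n using Nat.strong_induction_on with
  | _ n ih =>
    match n with
    | 0 =>
      intro γ hγ
      rw [comps_zero, List.mem_singleton] at hγ
      subst hγ
      intro x hx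
      simp at hx
    | (m + 1) =>
      intro γ hγ
      obtain ⟨j, hj, c, hc, rfl⟩ := mem_comps_succ.1 hγ
      intro x hx
      rcases List.mem_cons.1 hx with rfl | hx
      · omega
      · exact ih j hj c hc x hx

lemma comps_len : ∀ n, ∀ γ ∈ comps n, γ.length ≤ n := by
  intro n
  induction n using Nat.strong_induction_on with
  | _ n ih =>
    match n with
    | 0 =>
      intro γ hγ
      rw [comps_zero, List.mem_singleton] at hγ
      subst hγ
      simp
    | (m + 1) =>
      intro γ hγ
      obtain ⟨j, hj, c, hc, rfl⟩ := mem_comps_succ.1 hγ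
      have := ih j hj c hc
      simp only [List.length_cons]
      omega

lemma sum_list_range {M : Type*} [AddCommMonoid M] (f : ℕ → M) :
    ∀ n, ((List.range n).map f).sum = ∑ j ∈ Finset.range n, f j := by
  intro n
  induction n with
  | zero => simp
  | succ n ih =>
    rw [List.range_succ, List.map_append, List.sum_append, Finset.sum_range_succ, ih]
    simp

lemma comps_peel {M : Type*} [AddCommMonoid M] (n : ℕ) (f : List ℕ → M) :
    ((comps (n+1)).map f).sum
      = ∑ j ∈ Finset.range (n+1), ((comps j).map (fun c => f ((n + 1 - j) :: c))).sum := by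
  rw [comps_succ, List.map_flatMap, List.flatMap_def, List.sum_flatten, List.map_map]
  refine Eq.trans (congrArg List.sum
    (?_ : _ = (List.range (n+1)).map
      (fun j => (((comps j).map (fun c => (n + 1 - j) :: c)).map f).sum))) ?_
  · exact List.attach_map_val (l := List.range (n+1))
      (f := fun x => (((comps x).map (fun c => (n + 1 - x) :: c)).map f).sum)
  rw [sum_list_range]
  apply Finset.sum_congr rfl
  intro j _
  rw [List.map_map]
  rfl

/-- The bridge: summing over coarsenings of `1ⁿ` equals summing over compositions of `n`. -/
lemma bridge {M : Type*} [AddCommMonoid M] :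
    ∀ n (F : List ℕ → M),
      ((coarsenings (List.replicate n 1)).map F).sum = ((comps n).map F).sum := by
  intro n
  induction n with
  | zero =>
    intro F
    rw [comps_zero]
    rfl
  | succ m ih =>
    intro F
    rw [List.replicate_succ, coarsenings, List.map_append, List.sum_append]
    match m, ih with
    | 0, _ =>
      rw [comps_peel 0 F, Finset.sum_range_one, comps_zero]
      simp [coarsenings]
    | (m' + 1), ih =>
      set R := List.replicate (m' + 1) 1 with hR
      have hne : ∀ β ∈ coarsenings R, β ≠ [] := by
        intro β hβ
        rw [hR, List.replicate_succ] at hβ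
        exact coars_ne_nil hβ
      have hfm : (coarsenings R).filterMap (fun β => match β with
          | [] => none
          | b :: β' => some ((1 + b) :: β'))
          = (coarsenings R).map (fun β => (1 + β.head!) :: β.tail) :=
        filterMap_merge 1 _ hne
      rw [hfm, List.map_map, List.map_map]
      rw [ih ((F ∘ fun β => (1 + β.head!) :: β.tail)), ih (F ∘ (fun β => 1 :: β))]
      -- now both sums are over comps (m' + 1)
      rw [comps_peel (m' + 1) F, Finset.sum_range_succ]
      have hlast : ((comps (m' + 1)).map
          (fun c => F ((m' + 1 + 1 - (m' + 1)) :: c))).sum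
          = ((comps (m' + 1)).map (F ∘ (fun β => 1 :: β))).sum := by
        apply congrArg
        apply List.map_congr_left
        intro c _
        have : m' + 1 + 1 - (m' + 1) = 1 := by omega
        rw [this]
        rfl
      rw [hlast]
      have hrest : ∑ j ∈ Finset.range (m' + 1),
          ((comps j).map (fun c => F ((m' + 1 + 1 - j) :: c))).sum
          = ((comps (m' + 1)).map (F ∘ fun β => (1 + β.head!) :: β.tail)).sum := by
        rw [comps_peel (m' : ℕ) (F ∘ fun β => (1 + β.head!) :: β.tail)]
        apply Finset.sum_congr rfl
        intro j hj
        rw [Finset.mem_range] at hj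
        apply congrArg
        apply List.map_congr_left
        intro c _
        have h3 : (F ∘ fun β => (1 + β.head!) :: β.tail) ((m' + 1 - j) :: c)
            = F ((1 + (m' + 1 - j)) :: c) := rfl
        rw [h3]
        have : 1 + (m' + 1 - j) = m' + 1 + 1 - j := by omega
        rw [this]
      rw [hrest]
      exact add_comm _ _

/-! ### `hS 0`, `pS 0`, and the alternating e–h identity -/

lemma hS_zero : hS 0 = 1 := by
  funext m
  rw [one_apply]
  show (if ddeg m = 0 then (1 : ℚ) else 0) = _
  by_cases h : m = 0
  · rw [if_pos (by rw [h]; simp [ddeg]), if_pos h]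
  · rw [if_neg (fun hc => h ((ddeg_eq_zero_iff m).1 hc)), if_neg h]

lemma pS_zero : pS 0 = 1 := by
  funext m
  rw [one_apply]
  show (if ∃ j : ℕ+, m = Finsupp.single j 0 then (1 : ℚ) else 0) = _
  by_cases h : m = 0
  · rw [if_pos ⟨1, by rw [h]; simp⟩, if_pos h]
  · rw [if_neg ?_, if_neg h]
    rintro ⟨j, rfl⟩
    exact h (by simp)

noncomputable def XP1 (n : ℕ) : MvPowerSeries ℕ+ ℚ := X (pathE n) (fun _ => 1)

lemma XP1_zero : XP1 0 = 1 := X_empty _ _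

/-! ### Square-free monomials from finite sets -/

noncomputable def eSet (S : Finset ℕ+) : ℕ+ →₀ ℕ := S.sum fun j => Finsupp.single j 1

lemma eSet_apply (S : Finset ℕ+) (x : ℕ+) : eSet S x = if x ∈ S then 1 else 0 := by
  classical
  rw [eSet, Finsupp.finset_sum_apply]
  simp [Finsupp.single_apply]

lemma support_eSet (S : Finset ℕ+) : (eSet S).support = S := by
  classical
  ext x
  rw [Finsupp.mem_support_iff, eSet_apply]
  by_cases h : x ∈ S <;> simp [h]

lemma eSet_le_one (S : Finset ℕ+) (x : ℕ+) : eSet S x ≤ 1 := by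
  rw [eSet_apply]; split <;> omega

lemma eSet_le {S : Finset ℕ+} {m : ℕ+ →₀ ℕ} (h : S ⊆ m.support) : eSet S ≤ m := by
  rw [Finsupp.le_def]
  intro x
  rw [eSet_apply]
  by_cases hx : x ∈ S
  · rw [if_pos hx]
    have := Finsupp.mem_support_iff.1 (h hx)
    omega
  · rw [if_neg hx]; omega

lemma ddeg_eSet (S : Finset ℕ+) : ddeg (eSet S) = S.card := by
  classical
  rw [ddeg, Finsupp.sum, support_eSet,
    Finset.sum_congr rfl (fun x hx => by rw [eSet_apply, if_pos hx])]
  rw [Finset.card_eq_sum_ones]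

lemma eSet_support_eq {p : ℕ+ →₀ ℕ} (hsq : ∀ x, p x ≤ 1) : eSet p.support = p := by
  ext x
  rw [eSet_apply]
  by_cases hx : x ∈ p.support
  · rw [if_pos hx]
    have h1 := Finsupp.mem_support_iff.1 hx
    have h2 := hsq x
    omega
  · rw [if_neg hx]
    have := Finsupp.notMem_support_iff.1 hx
    omega

lemma ddeg_sqf {p : ℕ+ →₀ ℕ} (hsq : ∀ x, p x ≤ 1) : ddeg p = p.support.card := by
  conv_lhs => rw [← eSet_support_eq hsq]
  rw [ddeg_eSet]

/-! ### The alternating e–h identity -/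

lemma eh_identity (n : ℕ) :
    (∑ j ∈ Finset.range (n+1), ((-1 : ℚ)) ^ (n - j) • (eS (n + 1 - j) * hS j)) = hS (n+1) := by
  classical
  funext m
  have hL : (∑ j ∈ Finset.range (n+1), ((-1 : ℚ)) ^ (n - j) • (eS (n + 1 - j) * hS j)) m
      = ∑ j ∈ Finset.range (n+1), ((-1 : ℚ)) ^ (n - j) * ((eS (n + 1 - j) * hS j) m) := by
    rw [← MvPowerSeries.coeff_apply
      (∑ j ∈ Finset.range (n+1), ((-1 : ℚ)) ^ (n - j) • (eS (n + 1 - j) * hS j)) m, map_sum]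
    rfl
  rw [hL]
  simp only [coeff_mul_apply, Finset.mul_sum]
  rw [Finset.sum_comm]
  have hinner : ∀ pq ∈ Finset.HasAntidiagonal.antidiagonal m,
      (∑ j ∈ Finset.range (n+1),
        (-1 : ℚ) ^ (n - j) * (eS (n + 1 - j) pq.1 * hS j pq.2))
      = if (∀ x, pq.1 x ≤ 1) ∧ pq.1 ≠ 0 ∧ ddeg pq.1 + ddeg pq.2 = n + 1
        then ((-1 : ℚ)) ^ (ddeg pq.1 - 1) else 0 := by
    rintro ⟨p, q⟩ _
    dsimp only
    have heS : ∀ k, eS k p = if (ddeg p = k ∧ ∀ x, p x ≤ 1) then (1 : ℚ) else 0 :=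
      fun k => rfl
    have hhS : ∀ k, hS k q = if ddeg q = k then (1 : ℚ) else 0 := fun k => rfl
    by_cases hsq : ∀ x, p x ≤ 1
    · by_cases hq : ddeg q ≤ n
      · rw [Finset.sum_eq_single (ddeg q)]
        · by_cases hdp : ddeg p = n + 1 - ddeg q
          · rw [heS, if_pos ⟨hdp, hsq⟩, hhS, if_pos rfl]
            have h1 : p ≠ 0 := by
              intro h0
              have : ddeg p = 0 := by rw [h0]; simp [ddeg]
              omega
            rw [if_pos ⟨hsq, h1, by omega⟩]
            have h2 : n - ddeg q = ddeg p - 1 := by omega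
            rw [h2, mul_one, mul_one]
          · rw [heS, if_neg (fun hc => hdp hc.1), hhS, if_pos rfl,
              if_neg (fun hc => hdp (by omega))]
            ring
        · intro j hj hjne
          rw [hhS, if_neg (fun hc => hjne hc.symm)]
          ring
        · intro hc
          exact absurd (Finset.mem_range.2 (by omega)) hc
      · rw [if_neg ?_]
        · apply Finset.sum_eq_zero
          intro j hj
          rw [Finset.mem_range] at hj
          rw [hhS, if_neg (by omega)]
          ring
        · rintro ⟨_, hne, hsum⟩
          exact hne ((ddeg_eq_zero_iff p).1 (by omega))
    · rw [if_neg (fun hc => hsq hc.1)]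
      apply Finset.sum_eq_zero
      intro j _
      rw [heS, if_neg (fun hc => hsq hc.2)]
      ring
  rw [Finset.sum_congr rfl hinner]
  by_cases hm : ddeg m = n + 1
  · have hright : hS (n+1) m = 1 := by
      show (if ddeg m = n + 1 then (1 : ℚ) else 0) = 1
      rw [if_pos hm]
    rw [hright]
    have hcong : ∀ pq ∈ Finset.HasAntidiagonal.antidiagonal m,
        (if (∀ x, pq.1 x ≤ 1) ∧ pq.1 ≠ 0 ∧ ddeg pq.1 + ddeg pq.2 = n + 1
          then ((-1 : ℚ)) ^ (ddeg pq.1 - 1) else 0)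
        = (if (∀ x, pq.1 x ≤ 1) ∧ pq.1 ≠ 0
          then ((-1 : ℚ)) ^ (ddeg pq.1 - 1) else 0) := by
      rintro ⟨p, q⟩ hpq
      rw [Finset.HasAntidiagonal.mem_antidiagonal] at hpq
      have hd : ddeg p + ddeg q = n + 1 := by rw [← ddeg_add, hpq, hm]
      by_cases h : (∀ x, p x ≤ 1) ∧ p ≠ 0
      · rw [if_pos ⟨h.1, h.2, hd⟩, if_pos h]
      · rw [if_neg (by tauto), if_neg h]
    rw [Finset.sum_congr rfl hcong, ← Finset.sum_filter]
    have hone : ∑ pq ∈ (Finset.HasAntidiagonal.antidiagonal m).filter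
          (fun pq => (∀ x, pq.1 x ≤ 1) ∧ pq.1 ≠ 0), ((-1 : ℚ)) ^ (ddeg pq.1 - 1)
        = ∑ S ∈ m.support.powerset.filter (fun S => S ≠ ∅), ((-1 : ℚ)) ^ (S.card - 1) := by
      apply Finset.sum_nbij' (i := fun pq => pq.1.support)
        (j := fun S => (eSet S, m - eSet S))
      · rintro ⟨p, q⟩ hpq
        rw [Finset.mem_filter, Finset.HasAntidiagonal.mem_antidiagonal] at hpq
        have hadd : p + q = m := hpq.1
        have hsq : ∀ x, p x ≤ 1 := hpq.2.1
        have hne : p ≠ 0 := hpq.2.2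
        rw [Finset.mem_filter, Finset.mem_powerset]
        constructor
        · intro x hx
          rw [Finsupp.mem_support_iff] at hx ⊢
          have hx' : p x ≠ 0 := hx
          have : m x = p x + q x := by rw [← hadd]; rfl
          omega
        · intro h0
          exact hne (Finsupp.support_eq_empty.1 h0)
      · rintro S hS
        rw [Finset.mem_filter, Finset.mem_powerset] at hS
        rw [Finset.mem_filter, Finset.HasAntidiagonal.mem_antidiagonal]
        refine ⟨add_tsub_cancel_of_le (eSet_le hS.1), fun x => eSet_le_one S x, ?_⟩
        intro h0
        have h0' : eSet S = 0 := h0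
        apply hS.2
        rw [← support_eSet S, h0']
        simp
      · rintro ⟨p, q⟩ hpq
        rw [Finset.mem_filter, Finset.HasAntidiagonal.mem_antidiagonal] at hpq
        have hadd : p + q = m := hpq.1
        have hsq : ∀ x, p x ≤ 1 := hpq.2.1
        have h1 : eSet p.support = p := eSet_support_eq hsq
        have h2 : m - eSet p.support = q := by
          rw [h1, ← hadd, add_tsub_cancel_left]
        exact Prod.ext h1 h2
      · rintro S _
        exact support_eSet S
      · rintro ⟨p, q⟩ hpq
        rw [Finset.mem_filter, Finset.HasAntidiagonal.mem_antidiagonal] at hpq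
        rw [ddeg_sqf hpq.2.1]
    rw [hone]
    have hsupp_ne : m.support ≠ ∅ := by
      intro h
      have h2 : m = 0 := Finsupp.support_eq_empty.1 h
      rw [h2] at hm
      simp [ddeg] at hm
    have h0int : (∑ S ∈ m.support.powerset, (-1 : ℤ) ^ S.card) = 0 := by
      rw [Finset.sum_powerset_neg_one_pow_card, if_neg hsupp_ne]
    have h0 : (∑ S ∈ m.support.powerset, ((-1 : ℚ)) ^ S.card) = 0 := by
      exact_mod_cast h0int
    have hsplit := Finset.sum_filter_add_sum_filter_not m.support.powerset
      (fun S => S ≠ ∅) (fun S => ((-1 : ℚ)) ^ S.card)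
    have hempty : m.support.powerset.filter (fun S => ¬ S ≠ ∅) = {∅} := by
      ext S
      simp only [Finset.mem_filter, Finset.mem_powerset, not_not, Finset.mem_singleton]
      constructor
      · rintro ⟨_, h⟩; exact h
      · rintro rfl; exact ⟨Finset.empty_subset _, rfl⟩
    rw [hempty] at hsplit
    have hsing : ∑ S ∈ ({∅} : Finset (Finset ℕ+)), ((-1 : ℚ)) ^ S.card = 1 := by simp
    rw [hsing, h0] at hsplit
    have hval : ∑ S ∈ m.support.powerset.filter (fun S => S ≠ ∅), ((-1 : ℚ)) ^ (S.card - 1)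
        = -∑ S ∈ m.support.powerset.filter (fun S => S ≠ ∅), ((-1 : ℚ)) ^ S.card := by
      rw [← Finset.sum_neg_distrib]
      apply Finset.sum_congr rfl
      intro S hS
      rw [Finset.mem_filter] at hS
      have hc : 1 ≤ S.card := Finset.card_pos.2 (Finset.nonempty_iff_ne_empty.2 hS.2)
      calc ((-1 : ℚ)) ^ (S.card - 1) = -(((-1 : ℚ)) ^ (S.card - 1) * (-1)) := by ring
        _ = -((-1 : ℚ)) ^ S.card := by
            rw [← pow_succ]
            have he : S.card - 1 + 1 = S.card := by omega
            rw [he]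
    rw [hval]
    have : ∑ S ∈ m.support.powerset.filter (fun S => S ≠ ∅), ((-1 : ℚ)) ^ S.card = -1 := by
      linarith
    rw [this]
    norm_num
  · have hright : hS (n+1) m = 0 := by
      show (if ddeg m = n + 1 then (1 : ℚ) else 0) = 0
      rw [if_neg hm]
    rw [hright]
    apply Finset.sum_eq_zero
    rintro ⟨p, q⟩ hpq
    rw [Finset.HasAntidiagonal.mem_antidiagonal] at hpq
    apply if_neg
    rintro ⟨_, _, hsum⟩
    apply hm
    rw [← hpq, ddeg_add]
    exact hsum

/-! ### Expansions over compositions -/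

lemma list_sum_smul_mul {ι : Type*} (l : List ι) (a : ℚ) (b : MvPowerSeries ℕ+ ℚ)
    (g : ι → MvPowerSeries ℕ+ ℚ) :
    (l.map (fun c => a • (b * g c))).sum = a • (b * (l.map g).sum) := by
  induction l with
  | nil => simp
  | cons x l ih => simp [List.map_cons, List.sum_cons, ih, mul_add, smul_add]

lemma peelC (f : ℕ → MvPowerSeries ℕ+ ℚ) (n : ℕ) :
    ((comps (n+1)).map (fun γ => ((-1 : ℚ)) ^ (n + 1 - γ.length) • (γ.map f).prod)).sum
      = ∑ j ∈ Finset.range (n+1), ((-1 : ℚ)) ^ (n - j) •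
          (f (n + 1 - j) * ((comps j).map
            (fun γ => ((-1 : ℚ)) ^ (j - γ.length) • (γ.map f).prod)).sum) := by
  rw [comps_peel]
  apply Finset.sum_congr rfl
  intro j hj
  rw [Finset.mem_range] at hj
  have hcong : ∀ c ∈ comps j,
      ((-1 : ℚ)) ^ (n + 1 - ((n + 1 - j) :: c).length) • ((((n + 1 - j) :: c)).map f).prod
      = ((-1 : ℚ)) ^ (n - j) •
          (f (n + 1 - j) * (((-1 : ℚ)) ^ (j - c.length) • (c.map f).prod)) := by
    intro c hc
    have hlc := comps_len j c hc
    rw [List.length_cons, List.map_cons, List.prod_cons, Nat.succ_sub_succ]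
    have hsgn : ((-1 : ℚ)) ^ (n - c.length)
        = ((-1 : ℚ)) ^ (n - j) * ((-1 : ℚ)) ^ (j - c.length) := by
      rw [← pow_add]
      congr 1
      omega
    rw [hsgn, mul_smul, mul_smul_comm]
  rw [List.map_congr_left hcong, list_sum_smul_mul]

lemma hS_comps : ∀ n, hS n = ((comps n).map
    (fun γ => ((-1 : ℚ)) ^ (n - γ.length) • (γ.map eS).prod)).sum := by
  intro n
  induction n using Nat.strong_induction_on with
  | _ n ih =>
    match n, ih with
    | 0, _ =>
      rw [comps_zero, hS_zero]
      simp
    | (m + 1), ih =>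
      rw [peelC eS m,
        Finset.sum_congr rfl (fun j hj => by
          rw [← ih j (by rw [Finset.mem_range] at hj; omega)])]
      exact (eh_identity m).symm

lemma XP1_comps (n : ℕ) : XP1 n = ((comps n).map
    (fun γ => ((-1 : ℚ)) ^ (n - γ.length) • (γ.map pS).prod)).sum := by
  cases n with
  | zero =>
    rw [XP1_zero, comps_zero]
    simp
  | succ m =>
    have h1 : XP1 (m+1) = X (pathE (m+1)) (fun _ : Fin (m+1) => 1) := rfl
    rw [h1, X_path_whitney (m+1) (fun _ => 1) (Nat.succ_pos m) (fun _ => Nat.one_pos),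
      List.ofFn_const]
    exact bridge (m+1) (fun β => ((-1 : ℚ)) ^ (m + 1 - β.length) • pProd β)

lemma WR (n : ℕ) : XP1 (n+1)
    = ∑ j ∈ Finset.range (n+1), ((-1 : ℚ)) ^ (n - j) • (pS (n + 1 - j) * XP1 j) := by
  rw [XP1_comps (n+1), peelC pS n]
  apply Finset.sum_congr rfl
  intro j _
  rw [← XP1_comps j]

lemma reflect_sum (n : ℕ) (f : ℕ → MvPowerSeries ℕ+ ℚ) :
    ∑ j ∈ Finset.range (n+1), f j = ∑ j ∈ Finset.range (n+1), f (n - j) := by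
  rw [← Finset.sum_range_reflect f (n+1)]
  apply Finset.sum_congr rfl
  intro j hj
  rw [Finset.mem_range] at hj
  congr 1

lemma neg_pow_sub {k n : ℕ} (h : k ≤ n) :
    ((-1 : ℚ)) ^ (n - k) = ((-1 : ℚ)) ^ n * ((-1 : ℚ)) ^ k := by
  have h2 : ((-1 : ℚ)) ^ (n - k) * ((-1 : ℚ)) ^ k = ((-1 : ℚ)) ^ n := by
    rw [← pow_add]
    congr 1
    omega
  have h3 : ((-1 : ℚ)) ^ k * ((-1 : ℚ)) ^ k = 1 := by
    rw [← mul_pow]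
    norm_num
  calc ((-1 : ℚ)) ^ (n - k) = ((-1 : ℚ)) ^ (n - k) * (((-1 : ℚ)) ^ k * ((-1 : ℚ)) ^ k) := by
        rw [h3, mul_one]
    _ = (((-1 : ℚ)) ^ (n - k) * ((-1 : ℚ)) ^ k) * ((-1 : ℚ)) ^ k := by ring
    _ = ((-1 : ℚ)) ^ n * ((-1 : ℚ)) ^ k := by rw [h2]

/-- `XP1 (n+1) = ∑_{k≤n} (-1)^k • (pS (k+1) * XP1 (n-k))`. -/
lemma WR' (n : ℕ) : XP1 (n+1)
    = ∑ k ∈ Finset.range (n+1), ((-1 : ℚ)) ^ k • (pS (k + 1) * XP1 (n - k)) := by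
  rw [WR n, reflect_sum n]
  apply Finset.sum_congr rfl
  intro j hj
  rw [Finset.mem_range] at hj
  have e1 : n - (n - j) = j := by omega
  have e2 : n + 1 - (n - j) = j + 1 := by omega
  rw [e1, e2]

lemma star' (n : ℕ) : pS (n+1)
    = ∑ k ∈ Finset.range (n+1), ((-1 : ℚ)) ^ k • (XP1 (k + 1) * pS (n - k)) := by
  -- Z = ∑_{k ∈ range (n+2)} (-1)^k • (pS k * XP1 (n+1-k)) = 0
  have hZ : (∑ k ∈ Finset.range (n+2), ((-1 : ℚ)) ^ k • (pS k * XP1 (n + 1 - k))) = 0 := by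
    rw [Finset.sum_range_succ']
    have h0 : ((-1 : ℚ)) ^ 0 • (pS 0 * XP1 (n + 1 - 0)) = XP1 (n+1) := by
      rw [pS_zero, pow_zero, one_smul, one_mul]
      norm_num
    rw [h0]
    have h1 : ∑ k ∈ Finset.range (n+1), ((-1 : ℚ)) ^ (k + 1) • (pS (k + 1) * XP1 (n + 1 - (k + 1)))
        = -∑ k ∈ Finset.range (n+1), ((-1 : ℚ)) ^ k • (pS (k + 1) * XP1 (n - k)) := by
      rw [← Finset.sum_neg_distrib]
      apply Finset.sum_congr rfl
      intro k _
      have e1 : n + 1 - (k + 1) = n - k := by omega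
      rw [e1, pow_succ, mul_neg_one, neg_smul]
    rw [h1, ← WR' n]
    ring
  -- Z' = ∑_{k ∈ range (n+2)} (-1)^k • (XP1 k * pS (n+1-k)) = 0
  have hZ' : (∑ k ∈ Finset.range (n+2), ((-1 : ℚ)) ^ k • (XP1 k * pS (n + 1 - k))) = 0 := by
    have hrefl := reflect_sum (n+1) (fun k => ((-1 : ℚ)) ^ k • (XP1 k * pS (n + 1 - k)))
    rw [hrefl]
    have hcong : ∀ k ∈ Finset.range (n+2),
        ((-1 : ℚ)) ^ (n + 1 - k) • (XP1 (n + 1 - k) * pS (n + 1 - (n + 1 - k)))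
        = ((-1 : ℚ)) ^ (n+1) • (((-1 : ℚ)) ^ k • (pS k * XP1 (n + 1 - k))) := by
      intro k hk
      rw [Finset.mem_range] at hk
      have e1 : n + 1 - (n + 1 - k) = k := by omega
      rw [e1, neg_pow_sub (by omega : k ≤ n + 1), mul_smul, mul_comm]
    rw [Finset.sum_congr rfl hcong, ← Finset.smul_sum, hZ, smul_zero]
  -- extract pS (n+1)
  rw [Finset.sum_range_succ'] at hZ'
  have h0 : ((-1 : ℚ)) ^ 0 • (XP1 0 * pS (n + 1 - 0)) = pS (n+1) := by
    rw [XP1_zero, pow_zero, one_smul, one_mul]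
    norm_num
  rw [h0] at hZ'
  have h1 : ∑ k ∈ Finset.range (n+1), ((-1 : ℚ)) ^ (k + 1) • (XP1 (k + 1) * pS (n + 1 - (k + 1)))
      = -∑ k ∈ Finset.range (n+1), ((-1 : ℚ)) ^ k • (XP1 (k + 1) * pS (n - k)) := by
    rw [← Finset.sum_neg_distrib]
    apply Finset.sum_congr rfl
    intro k _
    have e1 : n + 1 - (k + 1) = n - k := by omega
    rw [e1, pow_succ, mul_neg_one, neg_smul]
  rw [h1] at hZ'
  exact (neg_add_eq_zero.mp hZ').symm

lemma star (n : ℕ) : pS (n+1)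
    = ∑ j ∈ Finset.range (n+1), ((-1 : ℚ)) ^ (n - j) • (XP1 (n + 1 - j) * pS j) := by
  rw [star' n, reflect_sum n]
  apply Finset.sum_congr rfl
  intro j hj
  rw [Finset.mem_range] at hj
  have e1 : n - (n - j) = j := by omega
  have e2 : n - j + 1 = n + 1 - j := by omega
  rw [e1, e2]

lemma pS_comps : ∀ n, pS n = ((comps n).map
    (fun γ => ((-1 : ℚ)) ^ (n - γ.length) • (γ.map XP1).prod)).sum := by
  intro n
  induction n using Nat.strong_induction_on with
  | _ n ih =>
    match n, ih with
    | 0, _ =>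
      rw [comps_zero, pS_zero]
      simp
    | (m + 1), ih =>
      rw [peelC XP1 m,
        Finset.sum_congr rfl (fun j hj => by
          rw [← ih j (by rw [Finset.mem_range] at hj; omega)])]
      exact star m

/-! ### `XPaths` as a product -/

def sigmaSucc {k : ℕ} (β : Fin (k+1) → Type) :
    (Σ i : Fin (k+1), β i) ≃ (β 0 ⊕ Σ i : Fin k, β i.succ) where
  toFun x := Fin.cases (motive := fun i => β i → β 0 ⊕ (Σ i : Fin k, β i.succ))
    (fun v => Sum.inl v) (fun i v => Sum.inr ⟨i, v⟩) x.1 x.2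
  invFun y := Sum.elim (fun v => ⟨0, v⟩) (fun x => ⟨x.1.succ, x.2⟩) y
  left_inv := by
    rintro ⟨i, v⟩
    induction i using Fin.cases with
    | zero => simp
    | succ i => simp
  right_inv := by
    rintro (v | ⟨i, v⟩) <;> simp

lemma multiset_map_sum {α β γ : Type*} (s : Finset γ) (g : γ → Multiset α) (f : α → β) :
    (∑ i ∈ s, g i).map f = ∑ i ∈ s, (g i).map f :=
  map_sum (Multiset.mapAddMonoidHom f) g s

lemma Xunion_cons (k : ℕ) (m : Fin (k+1) → ℕ) (Es : ∀ i, Multiset (Sym2 (Fin (m i)))) :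
    X (unionE Es) (fun _ => 1)
      = X (Es 0) (fun _ => 1) * X (unionE (fun i : Fin k => Es i.succ)) (fun _ => 1) := by
  classical
  set φ := sigmaSucc (fun i => Fin (m i)) with hφ
  have hrel := X_relabel φ (unionE Es) (fun _ => 1)
  have hw : ((fun _ : Σ i : Fin (k+1), Fin (m i) => (1 : ℕ)) ∘ φ.symm) = fun _ => (1 : ℕ) := rfl
  rw [hw] at hrel
  rw [← hrel]
  have hedges : (unionE Es).map (Sym2.map φ)
      = ((Es 0).map (Sym2.map Sum.inl))
        + (unionE fun i : Fin k => Es i.succ).map (Sym2.map Sum.inr) := by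
    rw [unionE, Fin.sum_univ_succ, Multiset.map_add]
    congr 1
    · rw [Multiset.map_map]
      have hf : (Sym2.map ⇑φ ∘ Sym2.map fun v : Fin (m 0) => (⟨0, v⟩ : Σ i, Fin (m i)))
          = Sym2.map Sum.inl := by
        funext e
        rw [Function.comp_apply, Sym2.map_map]
        apply congrFun
        apply congrArg
        funext v
        show φ ⟨0, v⟩ = Sum.inl v
        simp [hφ, sigmaSucc]
      rw [hf]
    · rw [unionE, multiset_map_sum, multiset_map_sum]
      apply Finset.sum_congr rfl
      intro i _
      rw [Multiset.map_map, Multiset.map_map]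
      have hf : (Sym2.map ⇑φ ∘ Sym2.map fun v : Fin (m i.succ) => (⟨i.succ, v⟩ : Σ i, Fin (m i)))
          = (Sym2.map Sum.inr ∘ Sym2.map fun v : Fin (m i.succ) =>
              (⟨i, v⟩ : Σ i' : Fin k, Fin (m i'.succ))) := by
        funext e
        rw [Function.comp_apply, Function.comp_apply, Sym2.map_map, Sym2.map_map]
        apply congrFun
        apply congrArg
        funext v
        show φ ⟨i.succ, v⟩ = Sum.inr ⟨i, v⟩
        simp [hφ, sigmaSucc]
      rw [hf]
  rw [hedges]
  have helim : (fun _ : Fin (m 0) ⊕ (Σ i : Fin k, Fin (m i.succ)) => (1 : ℕ))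
      = Sum.elim (fun _ => (1 : ℕ)) (fun _ => (1 : ℕ)) := by
    funext v
    cases v <;> rfl
  rw [helim]
  exact X_mul_X _ _ (fun _ => Nat.one_pos) (fun _ => Nat.one_pos)

lemma XPaths_eq : ∀ l : List ℕ, XPaths l = (l.map XP1).prod := by
  intro l
  induction l with
  | nil =>
    haveI : IsEmpty (Σ i : Fin (([] : List ℕ).length), Fin (([] : List ℕ).get i)) :=
      ⟨fun x => x.1.elim0⟩
    show X (unionE _) _ = _
    rw [X_empty]
    simp
  | cons a l ih =>
    calc XPaths (a :: l)
        = X (unionE (fun i : Fin (l.length + 1) => pathE ((a :: l).get i))) (fun _ => 1) := rfl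
      _ = X (pathE a) (fun _ => 1)
          * X (unionE (fun i : Fin l.length => pathE ((a :: l).get i.succ))) (fun _ => 1) :=
        Xunion_cons l.length _ _
      _ = XP1 a * XPaths l := rfl
      _ = XP1 a * (l.map XP1).prod := by rw [ih]
      _ = ((a :: l).map XP1).prod := by rw [List.map_cons, List.prod_cons]

/-! ### The expansion of `h` in the `e`-basis, applied to both worlds -/

def expandL : List ℕ → List (ℚ × List ℕ)
  | [] => [(1, [])]
  | n :: l => (comps n).flatMap fun γ => (expandL l).map fun q =>
      (((-1 : ℚ)) ^ (n - γ.length) * q.1, γ ++ q.2)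

lemma list_sum_mul_list_sum {ι κ : Type*} (l₁ : List ι) (l₂ : List κ)
    (f : ι → MvPowerSeries ℕ+ ℚ) (g : κ → MvPowerSeries ℕ+ ℚ) :
    (l₁.map f).sum * (l₂.map g).sum
      = (l₁.flatMap fun a => l₂.map fun b => f a * g b).sum := by
  induction l₁ with
  | nil => simp
  | cons a l ih =>
    rw [List.map_cons, List.sum_cons, add_mul, ih, List.flatMap_cons, List.sum_append]
    congr 1
    exact (List.sum_map_mul_left l₂ g (f a)).symm

lemma expandL_spec (Φ : ℕ → MvPowerSeries ℕ+ ℚ) (Ψ : List ℕ → MvPowerSeries ℕ+ ℚ)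
    (hnil : Ψ [] = 1)
    (happ : ∀ a b, Ψ (a ++ b) = Ψ a * Ψ b)
    (hexp : ∀ n, Φ n = ((comps n).map (fun γ => ((-1 : ℚ)) ^ (n - γ.length) • Ψ γ)).sum) :
    ∀ l : List ℕ, (l.map Φ).prod = ((expandL l).map (fun q => q.1 • Ψ q.2)).sum := by
  intro l
  induction l with
  | nil => simp [expandL, hnil]
  | cons n l ih =>
    rw [List.map_cons, List.prod_cons, ih, hexp n, list_sum_mul_list_sum]
    rw [show expandL (n :: l) = (comps n).flatMap (fun γ => (expandL l).map fun q =>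
      (((-1 : ℚ)) ^ (n - γ.length) * q.1, γ ++ q.2)) from rfl, List.map_flatMap]
    apply congrArg List.sum
    rw [List.flatMap_def, List.flatMap_def]
    apply congrArg List.flatten
    apply List.map_congr_left
    intro γ _
    rw [List.map_map]
    apply List.map_congr_left
    intro q _
    show ((-1 : ℚ)) ^ (n - γ.length) • Ψ γ * q.1 • Ψ q.2
        = (((-1 : ℚ)) ^ (n - γ.length) * q.1) • Ψ (γ ++ q.2)
    rw [happ, smul_mul_smul_comm]

lemma expandL_pos : ∀ l : List ℕ, ∀ q ∈ expandL l, ∀ x ∈ q.2, 0 < x := by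
  intro l
  induction l with
  | nil =>
    intro q hq
    rw [show expandL [] = [(1, ([] : List ℕ))] from rfl, List.mem_singleton] at hq
    subst hq
    intro x hx
    simp at hx
  | cons n l ih =>
    intro q hq
    rw [show expandL (n :: l) = (comps n).flatMap (fun γ => (expandL l).map fun q =>
      (((-1 : ℚ)) ^ (n - γ.length) * q.1, γ ++ q.2)) from rfl, List.mem_flatMap] at hq
    obtain ⟨γ, hγ, hq'⟩ := hq
    obtain ⟨r, hr, rfl⟩ := List.mem_map.1 hq'
    intro x hx
    rcases List.mem_append.1 hx with hx | hx
    · exact comps_pos n γ hγ x hx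
    · exact ih r hr x hx

/-! ### Transporting along `U` -/

lemma eProd_append (a b : List ℕ) : eProd (a ++ b) = eProd a * eProd b := by
  rw [eProd, eProd, eProd, List.map_append, List.prod_append]

lemma xProd_append (a b : List ℕ) :
    ((a ++ b).map XP1).prod = (a.map XP1).prod * (b.map XP1).prod := by
  rw [List.map_append, List.prod_append]

lemma sortDesc_perm (l : List ℕ) : (sortDesc l).Perm l := List.perm_insertionSort _ l

lemma sortDesc_sorted (l : List ℕ) : (sortDesc l).Pairwise (· ≥ ·) :=
  List.pairwise_insertionSort _ l

lemma eProd_perm {l₁ l₂ : List ℕ} (h : l₁.Perm l₂) : eProd l₁ = eProd l₂ :=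
  List.Perm.prod_eq (h.map eS)

lemma pProd_perm {l₁ l₂ : List ℕ} (h : l₁.Perm l₂) : pProd l₁ = pProd l₂ :=
  List.Perm.prod_eq (h.map pS)

lemma U_eProd (U : MvPowerSeries ℕ+ ℚ →ₗ[ℚ] MvPowerSeries ℕ+ ℚ)
    (hU : ∀ l : List ℕ, l.Pairwise (· ≥ ·) → (∀ x ∈ l, 0 < x) → U (eProd l) = XPaths l) :
    ∀ l : List ℕ, (∀ x ∈ l, 0 < x) → U (eProd l) = (l.map XP1).prod := by
  intro l hl
  have h1 : eProd l = eProd (sortDesc l) := eProd_perm (sortDesc_perm l).symm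
  rw [h1, hU (sortDesc l) (sortDesc_sorted l)
    (fun x hx => hl x ((sortDesc_perm l).mem_iff.1 hx)), XPaths_eq]
  exact List.Perm.prod_eq ((sortDesc_perm l).map XP1)

lemma U_hProd (U : MvPowerSeries ℕ+ ℚ →ₗ[ℚ] MvPowerSeries ℕ+ ℚ)
    (hU : ∀ l : List ℕ, l.Pairwise (· ≥ ·) → (∀ x ∈ l, 0 < x) → U (eProd l) = XPaths l) :
    ∀ l : List ℕ, U (hProd l) = pProd l := by
  intro l
  have hE : hProd l = ((expandL l).map (fun q => q.1 • eProd q.2)).sum :=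
    expandL_spec hS eProd rfl eProd_append hS_comps l
  have hP : pProd l = ((expandL l).map (fun q => q.1 • (q.2.map XP1).prod)).sum :=
    expandL_spec pS (fun γ => (γ.map XP1).prod) rfl xProd_append pS_comps l
  rw [hE, map_list_sum U, List.map_map, hP]
  apply congrArg List.sum
  apply List.map_congr_left
  intro q hq
  show U (q.1 • eProd q.2) = q.1 • (q.2.map XP1).prod
  rw [map_smul, U_eProd U hU q.2 (expandL_pos l q hq)]
/-- **Theorem.** Let `U : Sym → Sym` be the (unique) linear map with `U(e_λ) = X_{P_λ}`
for every partition `λ`.  Then `U(r_α) = X_{(P_{ℓ(α)}, α)}` for every nonempty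
composition `α`.  (Stated for an arbitrary linear map satisfying the defining property.) -/
theorem U_ribbon_eq_weighted_path
    (U : MvPowerSeries ℕ+ ℚ →ₗ[ℚ] MvPowerSeries ℕ+ ℚ)
    (hU : ∀ l : List ℕ, l.Pairwise (· ≥ ·) → (∀ x ∈ l, 0 < x) → U (eProd l) = XPaths l)
    (α : List ℕ) (hα : α ≠ []) (hαpos : ∀ x ∈ α, 0 < x) :
    U (ribbon α) = Xwpath α := by
  have hA := X_path_whitney α.length α.get (List.length_pos_iff.2 hα)
    (fun i => hαpos _ (List.get_mem α i))
  rw [List.ofFn_get] at hA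
  rw [ribbon, map_list_sum U, List.map_map,
    show Xwpath α = X (pathE α.length) α.get from rfl, hA]
  apply congrArg List.sum
  apply List.map_congr_left
  intro β hβ
  show U (((-1 : ℚ)) ^ (α.length - β.length) • hProd (sortDesc β))
      = ((-1 : ℚ)) ^ (α.length - β.length) • pProd β
  rw [map_smul, U_hProd U hU (sortDesc β)]
  congr 1
  exact pProd_perm (sortDesc_perm β)

end CSF
end
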